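/- arXiv:2308.05041 — 2 statements merged into one kernel-verified Lean document; each statement's English description precedes it below -/
import Mathlib

section
/- Fix an even integer L ≥ 6 and let Λ be the L×L toric grid graph. If a hard-core configuration σ satisfies ΔH(σ) < L, then there exists a path ω from σ to e or to o with Φ_ω ≤ H(σ)+1. In particular, Φ(σ,e) < H(e)+L+1 or Φ(σ,o) < H(e)+L+1, i.e. σ belongs to the initial cycle C_e or to the initial cycle C_o. -/
namespace HardCoreGrid

/-- Sites of the `L × L` toric grid graph. -/
abbrev Site (L : ℕ) := ZMod L × ZMod L

/-- Two sites are adjacent iff they differ by `±1` in exactly one coordinate (mod `L`). -/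
def adjacent (L : ℕ) (v w : Site L) : Prop :=
  (v.2 = w.2 ∧ (v.1 = w.1 + 1 ∨ w.1 = v.1 + 1)) ∨
  (v.1 = w.1 ∧ (v.2 = w.2 + 1 ∨ w.2 = v.2 + 1))

/-- A site is even iff the sum of its two coordinates is even. -/
def isEvenSite (L : ℕ) (v : Site L) : Prop := (v.1 + v.2).val % 2 = 0

instance decIsEvenSite (L : ℕ) (v : Site L) : Decidable (isEvenSite L v) :=
  inferInstanceAs (Decidable ((v.1 + v.2).val % 2 = 0))

/-- The set of even sites. -/
def Ve (L : ℕ) : Set (Site L) := {v | isEvenSite L v}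

/-- The set of odd sites. -/
def Vo (L : ℕ) : Set (Site L) := {v | ¬ isEvenSite L v}

/-- External boundary of a set of sites. -/
def extBoundary (L : ℕ) (A : Set (Site L)) : Set (Site L) :=
  {v | v ∉ A ∧ ∃ w ∈ A, adjacent L v w}

/-- The set `S_{ℓ₁,ℓ₂}(η)` of odd sites of a rhombus. -/
def Sset (L : ℕ) (η : Site L) (ℓ₁ ℓ₂ : ℕ) : Set (Site L) :=
  {v | ∃ k < ℓ₁, ∃ j < ℓ₂,
    v = (η.1 + (k : ZMod L) + (j : ZMod L), η.2 + (k : ZMod L) - (j : ZMod L))}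

/-- Non-degenerate odd rhombus `R_{ℓ₁,ℓ₂}(η) = S ∪ ∂⁺S`. -/
def rhombusND (L : ℕ) (η : Site L) (ℓ₁ ℓ₂ : ℕ) : Set (Site L) :=
  Sset L η ℓ₁ ℓ₂ ∪ extBoundary L (Sset L η ℓ₁ ℓ₂)

/-- Degenerate rhombus `R_{ℓ,0}(η)` (direction `(1,-1)`). -/
def degRhombus10 (L : ℕ) (η : Site L) (ℓ : ℕ) : Set (Site L) :=
  {w | ∃ k ≤ ℓ, w = (η.1 + (k : ZMod L), η.2 - (k : ZMod L))}

/-- Degenerate rhombus `R_{0,ℓ}(η)` (direction `(1,1)`). -/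
def degRhombus01 (L : ℕ) (η : Site L) (ℓ : ℕ) : Set (Site L) :=
  {w | ∃ k ≤ ℓ, w = (η.1 + (k : ZMod L), η.2 + (k : ZMod L))}

/-- General odd rhombus (including the degenerate ones). -/
def IsOddRhombus (L : ℕ) (R : Set (Site L)) : Prop :=
  (∃ η ∈ Vo L, ∃ ℓ₁, 1 ≤ ℓ₁ ∧ ℓ₁ ≤ L ∧ ∃ ℓ₂, 1 ≤ ℓ₂ ∧ ℓ₂ ≤ L ∧
    R = rhombusND L η ℓ₁ ℓ₂) ∨
  (∃ η ∈ Ve L, ∃ ℓ ≤ L, R = degRhombus10 L η ℓ) ∨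
  (∃ η ∈ Ve L, ∃ ℓ ≤ L, R = degRhombus01 L η ℓ)

/-- Edges between `A` and its complement (oriented from inside). -/
def boundaryPairs (L : ℕ) (A : Set (Site L)) : Set (Site L × Site L) :=
  {p | p.1 ∈ A ∧ p.2 ∉ A ∧ adjacent L p.1 p.2}

/-- Perimeter: number of edges with exactly one endpoint in `A`. -/
noncomputable def perimeter (L : ℕ) (A : Set (Site L)) : ℕ :=
  (boundaryPairs L A).ncard

/-- Two distinct even sites at graph distance two. -/
def evenAdj (L : ℕ) (a b : Site L) : Prop :=
  a ∈ Ve L ∧ b ∈ Ve L ∧ a ≠ b ∧ ∃ w, adjacent L a w ∧ adjacent L w b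

/-- Odd cluster: odd sites bring their four neighbours, and the even part is
connected in the distance-two graph on even sites. -/
def IsOddCluster (L : ℕ) (C : Set (Site L)) : Prop :=
  (∀ v ∈ C, v ∈ Vo L → ∀ w, adjacent L v w → w ∈ C) ∧
  (∀ a ∈ C ∩ Ve L, ∀ b ∈ C ∩ Ve L,
    Relation.ReflTransGen (fun x y => x ∈ C ∩ Ve L ∧ y ∈ C ∩ Ve L ∧ evenAdj L x y) a b)

/-- `R` is the surrounding rhombus of `C`: a minimal odd rhombus containing `C`. -/
def IsSurroundingRhombus (L : ℕ) (C R : Set (Site L)) : Prop :=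
  IsOddRhombus L R ∧ C ⊆ R ∧
  ∀ R', IsOddRhombus L R' → C ⊆ R' → R' ⊆ R → R' = R

/-- Hard-core configurations. -/
def IsConfig (L : ℕ) (σ : Site L → Bool) : Prop :=
  ∀ v w, adjacent L v w → ¬(σ v = true ∧ σ w = true)

/-- The configuration `e` occupying exactly the even sites. -/
def eCfg (L : ℕ) : Site L → Bool := fun v => decide (isEvenSite L v)

/-- The configuration `o` occupying exactly the odd sites. -/
def oCfg (L : ℕ) : Site L → Bool := fun v => ! decide (isEvenSite L v)

/-- The Hamiltonian `H(σ) = -#{occupied sites}`. -/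
noncomputable def energy (L : ℕ) (σ : Site L → Bool) : ℤ :=
  -(({v | σ v = true} : Set (Site L)).ncard : ℤ)

/-- Configurations differing in at most one site. -/
def stepRel (L : ℕ) (σ σ' : Site L → Bool) : Prop :=
  {v | σ v ≠ σ' v}.Subsingleton

/-- Configurations differing in exactly one site. -/
def stepRel1 (L : ℕ) (σ σ' : Site L → Bool) : Prop :=
  ∃ v, σ v ≠ σ' v ∧ ∀ w, σ w ≠ σ' w → w = v

/-- A path: a list of hard-core configurations, consecutive ones differing in
at most one site. -/
def IsPath (L : ℕ) (ω : List (Site L → Bool)) : Prop :=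
  (∀ ξ ∈ ω, IsConfig L ξ) ∧ ω.Chain' (stepRel L)

def IsPathFrom (L : ℕ) (ω : List (Site L → Bool)) (σ σ' : Site L → Bool) : Prop :=
  IsPath L ω ∧ ω.head? = some σ ∧ ω.getLast? = some σ'

/-- Odd region of a configuration: occupied odd sites and empty even sites. -/
def oddRegion (L : ℕ) (σ : Site L → Bool) : Set (Site L) :=
  {v | v ∈ Vo L ∧ σ v = true} ∪ {v | v ∈ Ve L ∧ σ v = false}

/-- Adjacency used to split the odd region into its connected components. -/
def regionAdj (L : ℕ) (A : Set (Site L)) (a b : Site L) : Prop :=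
  a ∈ A ∧ b ∈ A ∧ (adjacent L a b ∨ evenAdj L a b)

/-- `C` is a connected component of `A`. -/
def IsComponentOf (L : ℕ) (C A : Set (Site L)) : Prop :=
  ∃ v ∈ A, C = {w | Relation.ReflTransGen (regionAdj L A) v w}

/-- Number of occupied odd sites. -/
noncomputable def nOddOcc (L : ℕ) (σ : Site L → Bool) : ℕ :=
  ({v | v ∈ Vo L ∧ σ v = true} : Set (Site L)).ncard

/-- Number of occupied even sites. -/
noncomputable def nEvenOcc (L : ℕ) (σ : Site L → Bool) : ℕ :=
  ({v | v ∈ Ve L ∧ σ v = true} : Set (Site L)).ncard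

/-- `m(σ) = o(σ) - e(σ)`. -/
noncomputable def mval (L : ℕ) (σ : Site L → Bool) : ℤ :=
  (nOddOcc L σ : ℤ) - (nEvenOcc L σ : ℤ)

/-- A path is non-backtracking if it visits each manifold `V_m` at most once. -/
def NonBacktracking (L : ℕ) (ω : List (Site L → Bool)) : Prop :=
  ω.Pairwise (fun a b => mval L a ≠ mval L b)

/-- A diagonal of `C` broken in some `k ≥ 1` sites, in direction `d`. -/
def BrokenDiag (L : ℕ) (C : Set (Site L)) (d : Site L) : Prop :=
  ∃ k : ℕ, 1 ≤ k ∧ ∃ z : ℕ → Site L,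
    (∀ i < k, z i ∈ Vo L ∧ z i ∉ C) ∧
    (∀ i, i + 1 < k → z (i + 1) = z i + d) ∧
    z 0 - d ∈ C ∧ z (k - 1) + d ∈ C

/-- `C` has a broken (increasing or decreasing) diagonal. -/
def HasBrokenDiagonal (L : ℕ) (C : Set (Site L)) : Prop :=
  BrokenDiag L C (1, 1) ∨ BrokenDiag L C (1, -1)

/-- The `k` sites `z, z+d, …, z+(k-1)d`. -/
def barSet (L : ℕ) (z d : Site L) (k : ℕ) : Set (Site L) :=
  {w | ∃ i : ℕ, i < k ∧ w = z + i • d}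

/-- Diagonal bar of length `k`: `k` odd sites with consecutive ones differing
by `(1,1)`, or all by `(1,-1)`. -/
def IsDiagBar (L : ℕ) (B : Set (Site L)) (k : ℕ) : Prop :=
  ∃ z ∈ Vo L, B = barSet L z (1, 1) k ∨ B = barSet L z (1, -1) k

/-- Bar of length `k`: `k` odd sites in a single column, row or diagonal with
consecutive ones at distance 2. -/
def IsBar (L : ℕ) (B : Set (Site L)) (k : ℕ) : Prop :=
  ∃ z ∈ Vo L, B = barSet L z (0, 2) k ∨ B = barSet L z (2, 0) k ∨
    B = barSet L z (1, 1) k ∨ B = barSet L z (1, -1) k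

/-- Every site of `B` is at graph distance two from the set `S`. -/
def AttachedTo (L : ℕ) (B S : Set (Site L)) : Prop :=
  ∀ b ∈ B, b ∉ S ∧ (∀ s ∈ S, ¬ adjacent L b s) ∧
    ∃ s ∈ S, ∃ w, adjacent L b w ∧ adjacent L w s

/-- Number of odd sites of `C` in the column `x`. -/
noncomputable def colCount (L : ℕ) (C : Set (Site L)) (x : ZMod L) : ℕ :=
  ({v | v ∈ C ∧ v ∈ Vo L ∧ v.1 = x} : Set (Site L)).ncard

/-- Number of odd sites of `C` in the row `y`. -/
noncomputable def rowCount (L : ℕ) (C : Set (Site L)) (y : ZMod L) : ℕ :=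
  ({v | v ∈ C ∧ v ∈ Vo L ∧ v.2 = y} : Set (Site L)).ncard

/-- A set winds around the torus if it contains `L/2` odd sites in a single
column or row. -/
def Winds (L : ℕ) (C : Set (Site L)) : Prop :=
  (∃ x, L / 2 ≤ colCount L C x) ∨ (∃ y, L / 2 ≤ rowCount L C y)

/-- Monotone odd cluster. -/
def MonotoneCluster (L : ℕ) (C : Set (Site L)) : Prop :=
  ∃ R, IsSurroundingRhombus L C R ∧
    ((¬ Winds L R ∧ perimeter L C = perimeter L R) ∨
     (Winds L R ∧ perimeter L C = 4 * L))

/-- Antiknob: an odd site not in `C` with at least three neighbouring even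
sites in `C`. -/
def IsAntiknob (L : ℕ) (C : Set (Site L)) (z : Site L) : Prop :=
  z ∈ Vo L ∧ z ∉ C ∧
  3 ≤ ({w | adjacent L z w ∧ w ∈ Ve L ∧ w ∈ C} : Set (Site L)).ncard

/-- The set `C_ir(e,o)`. -/
def Cir (L : ℕ) : Set (Site L → Bool) :=
  {σ | IsConfig L σ ∧ ∃ η ∈ Vo L, ∃ v ∈ Ve L, ∃ D : Set (Site L),
    (D = degRhombus10 L v 1 ∨ D = degRhombus01 L v 1) ∧
    Disjoint (rhombusND L η (L / 2 - 1) (L / 2 - 1)) D ∧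
    (∀ a ∈ D, ∀ b ∈ rhombusND L η (L / 2 - 1) (L / 2 - 1), ¬ adjacent L a b) ∧
    (∃ a ∈ D, ∃ b ∈ rhombusND L η (L / 2 - 1) (L / 2 - 1), ∃ w,
      adjacent L a w ∧ adjacent L w b) ∧
    oddRegion L σ = rhombusND L η (L / 2 - 1) (L / 2 - 1) ∪ D}

/-- The set `C_gr(e,o)`. -/
def Cgr (L : ℕ) : Set (Site L → Bool) :=
  {σ | IsConfig L σ ∧ ∃ C : Set (Site L), ∃ v ∈ Ve L,
    IsOddCluster L C ∧ (C ∩ Vo L).Nonempty ∧ MonotoneCluster L C ∧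
    (∃ η ∈ Vo L, ∃ k, 1 ≤ k ∧ k ≤ L / 2 - 1 ∧ ∃ B,
      IsDiagBar L B k ∧ AttachedTo L B (Sset L η (L / 2 - 1) (L / 2 - 1)) ∧
      C = rhombusND L η (L / 2 - 1) (L / 2 - 1) ∪ B ∪ extBoundary L B) ∧
    v ∉ C ∧ (∃ z, IsAntiknob L C z ∧ adjacent L v z) ∧
    oddRegion L σ = C ∪ {v}}

/-- The set `C_cr(e,o)`. -/
def Ccr (L : ℕ) : Set (Site L → Bool) :=
  {σ | IsConfig L σ ∧ ∃ C : Set (Site L), ∃ v ∈ Ve L,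
    IsOddCluster L C ∧ (C ∩ Vo L).Nonempty ∧ MonotoneCluster L C ∧
    (∃ η ∈ Vo L, ∃ k, 1 ≤ k ∧ k ≤ L / 2 - 2 ∧ ∃ B,
      IsDiagBar L B k ∧ AttachedTo L B (Sset L η (L / 2 - 1) (L / 2)) ∧
      C = rhombusND L η (L / 2 - 1) (L / 2) ∪ B ∪ extBoundary L B) ∧
    v ∉ C ∧ (∃ z, IsAntiknob L C z ∧ adjacent L v z) ∧
    oddRegion L σ = C ∪ {v}}

/-- The set `C_sb(e,o)`. -/
def Csb (L : ℕ) : Set (Site L → Bool) :=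
  {σ | IsConfig L σ ∧ ∃ C : Set (Site L), ∃ d₁ d₂ : Site L,
    IsOddCluster L C ∧ (C ∩ Vo L).Nonempty ∧ MonotoneCluster L C ∧
    ((∃ x y₀ : ZMod L,
        C ∩ Vo L = {v | ∃ i : ℕ, i < L / 2 - 1 ∧ v = (x, y₀ + 2 * (i : ZMod L))}) ∨
     (∃ y x₀ : ZMod L,
        C ∩ Vo L = {v | ∃ i : ℕ, i < L / 2 - 1 ∧ v = (x₀ + 2 * (i : ZMod L), y)})) ∧
    d₁ ≠ d₂ ∧ d₁ ∈ Ve L ∧ d₂ ∈ Ve L ∧ d₁ ∉ C ∧ d₂ ∉ C ∧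
    (∃ z, IsAntiknob L C z ∧ adjacent L d₁ z ∧ adjacent L d₂ z) ∧
    oddRegion L σ = C ∪ {d₁, d₂}}

/-- The odd sites of an `m`-uple bridge (`m` contiguous columns or rows). -/
def bridgeOddSet (L : ℕ) (x : ZMod L) (m : ℕ) (vert : Bool) : Set (Site L) :=
  if vert then {v | v ∈ Vo L ∧ ∃ i : ℕ, i < m ∧ v.1 = x + (i : ZMod L)}
  else {v | v ∈ Vo L ∧ ∃ i : ℕ, i < m ∧ v.2 = x + (i : ZMod L)}

def IsMupleBridgeSet (L : ℕ) (S : Set (Site L)) (m : ℕ) : Prop :=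
  ∃ x vert, S = bridgeOddSet L x m vert

/-- A family of pairwise disjoint bars attached to `S`. -/
def BarsFamily (L : ℕ) (r : ℕ) (B : Fin r → Set (Site L)) (len : Fin r → ℕ)
    (S : Set (Site L)) : Prop :=
  (∀ i, IsBar L (B i) (len i)) ∧ (∀ i, AttachedTo L (B i) S) ∧
  (∀ i j, i ≠ j → Disjoint (B i) (B j))

/-- The set `C_mb(e,o)`. -/
def Cmb (L : ℕ) : Set (Site L → Bool) :=
  {σ | IsConfig L σ ∧ ∃ C : Set (Site L), ∃ v : Site L,
    IsOddCluster L C ∧ (C ∩ Vo L).Nonempty ∧ MonotoneCluster L C ∧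
    v ∈ Ve L ∧ v ∉ C ∧ (∃ z, IsAntiknob L C z ∧ adjacent L v z) ∧
    oddRegion L σ = C ∪ {v} ∧
    ((∃ S, IsMupleBridgeSet L S (L - 3) ∧ C = S ∪ extBoundary L S) ∨
     (∃ m, 2 ≤ m ∧ m < L - 3 ∧ ∃ S, IsMupleBridgeSet L S m ∧
       ∃ k ≤ L / 2 - 1, ∃ r : ℕ, ∃ B : Fin r → Set (Site L), ∃ len : Fin r → ℕ,
         BarsFamily L r B len S ∧ Finset.univ.sum len = k ∧
         C = (S ∪ ⋃ i, B i) ∪ extBoundary L (S ∪ ⋃ i, B i)) ∨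
     (∃ S, IsMupleBridgeSet L S 1 ∧
       ∃ k ≤ L / 2 - 1, ∃ r : ℕ, ∃ B : Fin r → Set (Site L), ∃ len : Fin r → ℕ,
         BarsFamily L r B len S ∧ Finset.univ.sum len = k ∧
         C = (S ∪ ⋃ i, B i) ∪ extBoundary L (S ∪ ⋃ i, B i) ∧
         ∀ η ∈ Vo L, ¬ rhombusND L η (L / 2 - 1) (L / 2) ⊆ C))}

/-- Distance between two columns (or rows) of the torus. -/
def zdist (L : ℕ) (a b : ZMod L) : ℕ := min (a - b).val (b - a).val

/-- The set `C_ib(e,o)`. -/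
def Cib (L : ℕ) : Set (Site L → Bool) :=
  {σ | IsConfig L σ ∧ ∃ C : Set (Site L), ∃ v : Site L,
    IsOddCluster L C ∧ (C ∩ Vo L).Nonempty ∧ MonotoneCluster L C ∧
    (∀ η ∈ Vo L, ¬ rhombusND L η (L / 2 - 1) (L / 2 - 1) ⊆ C) ∧
    v ∈ Ve L ∧ v ∉ C ∧ (∃ z, IsAntiknob L C z ∧ adjacent L v z) ∧
    oddRegion L σ = C ∪ {v} ∧
    ((∃ x : ZMod L, colCount L C x = L / 2 - 1 ∧
        ∀ x', x' ≠ x → colCount L C x' ≤ L / 2 - 1 - zdist L x' x) ∨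
     (∃ x : ZMod L, colCount L C x = L / 2 - 1 ∧ colCount L C (x + 1) = L / 2 - 1 ∧
        ∀ x', x' ≠ x → x' ≠ x + 1 →
          colCount L C x' ≤ L / 2 - 1 - min (zdist L x' x) (zdist L x' (x + 1))) ∨
     (∃ y : ZMod L, rowCount L C y = L / 2 - 1 ∧
        ∀ y', y' ≠ y → rowCount L C y' ≤ L / 2 - 1 - zdist L y' y) ∨
     (∃ y : ZMod L, rowCount L C y = L / 2 - 1 ∧ rowCount L C (y + 1) = L / 2 - 1 ∧
        ∀ y', y' ≠ y → y' ≠ y + 1 →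
          rowCount L C y' ≤ L / 2 - 1 - min (zdist L y' y) (zdist L y' (y + 1)))) ∧
    (∃ R, IsSurroundingRhombus L C R ∧
      ∀ η ∈ Vo L, ¬ R ⊆ rhombusND L η (L / 2 - 1) (L / 2 - 1))}

/-- Maximal energy along a path. -/
noncomputable def pathMax (L : ℕ) (ω : List (Site L → Bool)) : WithBot ℤ :=
  (ω.map (energy L)).maximum

/-- Optimal paths from `e` to `o`. -/
def IsOptimalPath (L : ℕ) (ω : List (Site L → Bool)) : Prop :=
  IsPathFrom L ω (eCfg L) (oCfg L) ∧
  ∀ ω', IsPathFrom L ω' (eCfg L) (oCfg L) → pathMax L ω ≤ pathMax L ω'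

/-- The saddles `S(ω)` of a path `ω`. -/
def saddleSet (L : ℕ) (ω : List (Site L → Bool)) : Set (Site L → Bool) :=
  {ξ | ξ ∈ ω ∧ (energy L ξ : WithBot ℤ) = pathMax L ω}

/-- A saddle: a maximal-energy configuration of some optimal path. -/
def IsSaddle (L : ℕ) (ξ : Site L → Bool) : Prop :=
  ∃ ω, IsOptimalPath L ω ∧ ξ ∈ saddleSet L ω

/-- Essential saddles. -/
def IsEssentialSaddle (L : ℕ) (ξ : Site L → Bool) : Prop :=
  IsSaddle L ξ ∧
  ((∃ ω, IsOptimalPath L ω ∧ saddleSet L ω = {ξ}) ∨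
   (∃ ω, IsOptimalPath L ω ∧ ξ ∈ saddleSet L ω ∧
     ∀ ω', IsOptimalPath L ω' → ¬ saddleSet L ω' ⊆ saddleSet L ω \ {ξ}))

/-! ### Auxiliary development -/

section Aux

variable {L : ℕ}

/-- parity of an element of `ZMod L` -/
def pv (a : ZMod L) : ℕ := a.val % 2

lemma pv_lt (a : ZMod L) : pv a < 2 := Nat.mod_lt _ (by norm_num)

lemma pv_add [NeZero L] (hL2 : 2 ∣ L) (a b : ZMod L) :
    pv (a + b) = (pv a + pv b) % 2 := by
  unfold pv
  rw [ZMod.val_add, Nat.mod_mod_of_dvd _ hL2, Nat.add_mod]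

lemma pv_one (hL6 : 6 ≤ L) : pv (1 : ZMod L) = 1 := by
  haveI : Fact (1 < L) := ⟨by omega⟩
  simp [pv, ZMod.val_one]

lemma isEvenSite_iff_pv (v : Site L) : isEvenSite L v ↔ pv (v.1 + v.2) = 0 := Iff.rfl

lemma isEvenSite_flip [NeZero L] (hL2 : 2 ∣ L) (hL6 : 6 ≤ L) (a b : ZMod L) :
    (isEvenSite L (a + 1, b) ↔ ¬ isEvenSite L (a, b)) := by
  rw [isEvenSite_iff_pv, isEvenSite_iff_pv]
  simp only
  have h1 : a + 1 + b = (a + b) + 1 := by ring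
  rw [h1, pv_add hL2, pv_one hL6]
  have := pv_lt (a + b)
  omega

/-- sites with equal parity-sum -/
lemma isEvenSite_congr [NeZero L] (hL2 : 2 ∣ L) {v w : Site L}
    (h : pv (v.1 + v.2) = pv (w.1 + w.2)) : (isEvenSite L v ↔ isEvenSite L w) := by
  rw [isEvenSite_iff_pv, isEvenSite_iff_pv, h]

lemma adjacent_symm {v w : Site L} (h : adjacent L v w) : adjacent L w v := by
  unfold adjacent at *
  tauto

lemma adjacent_cases {v w : Site L} (h : adjacent L v w) :
    w = (v.1 + 1, v.2) ∨ w = (v.1 - 1, v.2) ∨ w = (v.1, v.2 + 1) ∨ w = (v.1, v.2 - 1) := by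
  obtain ⟨h2, h1 | h1⟩ | ⟨h2, h1 | h1⟩ := h
  · right; left
    rw [Prod.ext_iff]
    exact ⟨by rw [h1]; ring, h2.symm⟩
  · left
    rw [Prod.ext_iff]
    exact ⟨h1, h2.symm⟩
  · right; right; right
    rw [Prod.ext_iff]
    exact ⟨h2.symm, by rw [h1]; ring⟩
  · right; right; left
    rw [Prod.ext_iff]
    exact ⟨h2.symm, h1⟩

lemma adjacent_right (v : Site L) : adjacent L v (v.1 + 1, v.2) := by
  unfold adjacent; simp

lemma adjacent_left (v : Site L) : adjacent L v (v.1 - 1, v.2) := by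
  unfold adjacent; left; constructor
  · rfl
  · left; simp [sub_add_cancel]

lemma adjacent_up (v : Site L) : adjacent L v (v.1, v.2 + 1) := by
  unfold adjacent; simp

lemma adjacent_down (v : Site L) : adjacent L v (v.1, v.2 - 1) := by
  unfold adjacent; right; constructor
  · rfl
  · left; simp [sub_add_cancel]

lemma one_ne_zero' (hL6 : 6 ≤ L) : (1 : ZMod L) ≠ 0 := by
  haveI : NeZero L := ⟨by omega⟩
  intro h
  rw [show ((1 : ZMod L)) = ((1 : ℕ) : ZMod L) by norm_num] at h
  rw [ZMod.natCast_eq_zero_iff] at h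
  have := Nat.le_of_dvd one_pos h
  omega

lemma two_ne_zero' (hL6 : 6 ≤ L) : (2 : ZMod L) ≠ 0 := by
  haveI : NeZero L := ⟨by omega⟩
  intro h
  rw [show ((2 : ZMod L)) = ((2 : ℕ) : ZMod L) by norm_num] at h
  rw [ZMod.natCast_eq_zero_iff] at h
  have := Nat.le_of_dvd two_pos h
  omega

/-- Target occupation predicate: `b = true` for the even sublattice, `false` for odd. -/
def occT (L : ℕ) (b : Bool) (v : Site L) : Prop := (isEvenSite L v ↔ b = true)

instance (b : Bool) (v : Site L) : Decidable (occT L b v) := by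
  unfold occT; infer_instance

/-- Target configuration. -/
def tCfg (L : ℕ) (b : Bool) : Site L → Bool := fun v => decide (occT L b v)

lemma tCfg_true : tCfg L true = eCfg L := by
  funext v
  simp [tCfg, occT, eCfg]

lemma tCfg_false : tCfg L false = oCfg L := by
  funext v
  by_cases h : isEvenSite L v <;> simp [tCfg, occT, oCfg, h]

lemma occT_congr [NeZero L] (hL2 : 2 ∣ L) (b : Bool) {v w : Site L}
    (h : pv (v.1 + v.2) = pv (w.1 + w.2)) : (occT L b v ↔ occT L b w) := by
  unfold occT
  rw [isEvenSite_congr hL2 h]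

lemma occT_flip [NeZero L] (hL2 : 2 ∣ L) (hL6 : 6 ≤ L) (b : Bool) (a c : ZMod L) :
    (occT L b (a + 1, c) ↔ ¬ occT L b (a, c)) := by
  unfold occT
  rw [isEvenSite_flip hL2 hL6]
  tauto

/-- A column is `b`-full if all its `b`-parity sites are occupied. -/
def fullCol (L : ℕ) (b : Bool) (σ : Site L → Bool) (c : ZMod L) : Prop :=
  ∀ y, occT L b (c, y) → σ (c, y) = true

/-- Number of empty target-parity sites. -/
noncomputable def defect (L : ℕ) [NeZero L] (b : Bool) (σ : Site L → Bool) : ℕ :=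
  (Finset.univ.filter (fun v : Site L => occT L b v ∧ σ v = false)).card

lemma energy_eq_card [NeZero L] (σ : Site L → Bool) :
    energy L σ = -((Finset.univ.filter (fun v : Site L => σ v = true)).card : ℤ) := by
  unfold energy
  congr 1
  norm_cast
  rw [Set.ncard_eq_toFinset_card']
  congr 1
  ext v
  simp

lemma energy_update_true [NeZero L] (σ : Site L → Bool) (z : Site L) (h : σ z = false) :
    energy L (Function.update σ z true) = energy L σ - 1 := by
  rw [energy_eq_card, energy_eq_card]
  have h1 : (Finset.univ.filter (fun v : Site L => Function.update σ z true v = true))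
      = insert z (Finset.univ.filter (fun v : Site L => σ v = true)) := by
    ext w
    by_cases hw : w = z <;> simp [hw, Function.update_apply, h]
  rw [h1, Finset.card_insert_of_notMem (by simp [h])]
  push_cast
  ring

lemma energy_update_false [NeZero L] (σ : Site L → Bool) (z : Site L) (h : σ z = true) :
    energy L (Function.update σ z false) = energy L σ + 1 := by
  rw [energy_eq_card, energy_eq_card]
  have h1 : (Finset.univ.filter (fun v : Site L => σ v = true))
      = insert z (Finset.univ.filter (fun v : Site L => Function.update σ z false v = true)) := by
    ext w
    by_cases hw : w = z <;> simp [hw, Function.update_apply, h]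
  rw [h1, Finset.card_insert_of_notMem (by simp)]
  push_cast
  ring

lemma stepRel_update (σ : Site L → Bool) (z : Site L) (a : Bool) :
    stepRel L σ (Function.update σ z a) := by
  have key : ∀ w : Site L, σ w ≠ Function.update σ z a w → w = z := by
    intro w hw
    by_contra h
    exact hw (by rw [Function.update_of_ne h])
  intro x hx y hy
  rw [key x hx, key y hy]

lemma config_update_false {σ : Site L → Bool} (hσ : IsConfig L σ) (z : Site L) :
    IsConfig L (Function.update σ z false) := by
  intro v w hvw hc
  obtain ⟨h1, h2⟩ := hc
  rw [Function.update_apply] at h1 h2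
  split at h1
  · exact Bool.false_ne_true h1
  · split at h2
    · exact Bool.false_ne_true h2
    · exact hσ v w hvw ⟨h1, h2⟩

lemma config_update_true {σ : Site L → Bool} (hσ : IsConfig L σ) (z : Site L)
    (hz : ∀ w, adjacent L z w → σ w = false) (hzz : ¬ adjacent L z z) :
    IsConfig L (Function.update σ z true) := by
  intro v w hvw hc
  obtain ⟨h1, h2⟩ := hc
  by_cases hvz : v = z
  · by_cases hwz : w = z
    · rw [hvz, hwz] at hvw
      exact hzz hvw
    · rw [Function.update_of_ne hwz] at h2
      rw [hvz] at hvw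
      have hw0 : σ w = false := hz w hvw
      simp [hw0] at h2
  · rw [Function.update_of_ne hvz] at h1
    by_cases hwz : w = z
    · rw [hwz] at hvw
      have hv0 : σ v = false := hz v (adjacent_symm hvw)
      simp [hv0] at h1
    · rw [Function.update_of_ne hwz] at h2
      exact hσ v w hvw ⟨h1, h2⟩

lemma not_adjacent_self (hL6 : 6 ≤ L) (z : Site L) : ¬ adjacent L z z := by
  intro h
  have h1 := one_ne_zero' hL6
  obtain ⟨-, h | h⟩ | ⟨-, h | h⟩ := h <;> exact h1 (left_eq_add.mp h)

end Aux

section Aux2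

variable {L : ℕ}

lemma empty_of_nbr {σ : Site L → Bool} (hσ : IsConfig L σ) {v w : Site L}
    (hadj : adjacent L v w) (hw : σ w = true) : σ v = false := by
  cases h : σ v
  · rfl
  · exact absurd ⟨h, hw⟩ (hσ v w hadj)

lemma cycle_indep_card [NeZero L] (T : Finset (ZMod L)) (hT : ∀ y ∈ T, y + 1 ∉ T) :
    2 * T.card ≤ L ∧ (2 * T.card = L → ∀ y ∈ T, y + 2 ∈ T) := by
  have hinj : Function.Injective (fun a : ZMod L => a + 1) := fun a b h => by simpa using h
  have hS : (T.image (fun a => a + 1)) ⊆ Tᶜ := by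
    intro x hx
    obtain ⟨y, hy, rfl⟩ := Finset.mem_image.mp hx
    simpa using hT y hy
  have hScard : (T.image (fun a => a + 1)).card = T.card := Finset.card_image_of_injective _ hinj
  have hcompl : Tᶜ.card = Fintype.card (ZMod L) - T.card := Finset.card_compl T
  have hcard : Fintype.card (ZMod L) = L := ZMod.card L
  have hle : T.card ≤ Fintype.card (ZMod L) := Finset.card_le_univ T
  have h1 := Finset.card_le_card hS
  constructor
  · omega
  · intro heq y hy
    by_contra hy2
    have hmem : y + 2 ∈ Tᶜ := Finset.mem_compl.mpr hy2
    have hSeq : T.image (fun a => a + 1) = Tᶜ :=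
      Finset.eq_of_subset_of_card_le hS (by omega)
    rw [← hSeq] at hmem
    obtain ⟨w, hw, hweq⟩ := Finset.mem_image.mp hmem
    have hwy : w = y + 1 := by
      have h2 : w + 1 = y + 1 + 1 := by rw [hweq]; ring
      exact add_right_cancel h2
    rw [hwy] at hw
    exact hT y hy hw

/-- Number of occupied sites in column `c`. -/
def colOcc (L : ℕ) [NeZero L] (σ : Site L → Bool) (c : ZMod L) : ℕ :=
  (Finset.univ.filter (fun y : ZMod L => σ (c, y) = true)).card

lemma card_occ_eq_sum [NeZero L] (σ : Site L → Bool) :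
    (Finset.univ.filter (fun v : Site L => σ v = true)).card = ∑ c : ZMod L, colOcc L σ c := by
  rw [Finset.card_eq_sum_card_fiberwise (f := Prod.fst) (t := Finset.univ)
    (fun x _ => Finset.mem_univ x.1)]
  apply Finset.sum_congr rfl
  intro c _
  apply Finset.card_nbij' (i := Prod.snd) (j := fun y => (c, y))
  · intro v hv
    simp only [Finset.mem_coe, Finset.mem_filter, Finset.mem_univ, true_and] at hv ⊢
    obtain ⟨h1, h2⟩ := hv
    have h3 : ((c, v.2) : Site L) = v := Prod.ext_iff.mpr ⟨h2.symm, rfl⟩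
    rw [h3]
    exact h1
  · intro y hy
    simp only [Finset.mem_coe, Finset.mem_filter, Finset.mem_univ, true_and] at hy ⊢
    exact ⟨hy, trivial⟩
  · intro v hv
    simp only [Finset.mem_coe, Finset.mem_filter, Finset.mem_univ, true_and] at hv
    exact Prod.ext_iff.mpr ⟨hv.2.symm, rfl⟩
  · intro y _
    rfl

lemma two_mul_card_even [NeZero L] (hL2 : 2 ∣ L) (hL6 : 6 ≤ L) :
    2 * (Finset.univ.filter (fun v : Site L => isEvenSite L v)).card = L * L := by
  have hcard : (Finset.univ.filter (fun v : Site L => isEvenSite L v)).card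
      = (Finset.univ.filter (fun v : Site L => ¬ isEvenSite L v)).card := by
    apply Finset.card_nbij' (i := fun v => (v.1 + 1, v.2)) (j := fun v => (v.1 - 1, v.2))
    · intro v hv
      simp only [Finset.mem_coe, Finset.mem_filter, Finset.mem_univ, true_and] at hv ⊢
      rw [isEvenSite_flip hL2 hL6]
      exact not_not_intro hv
    · intro v hv
      simp only [Finset.mem_coe, Finset.mem_filter, Finset.mem_univ, true_and] at hv ⊢
      have hflip := isEvenSite_flip hL2 hL6 (v.1 - 1) v.2
      have he : v.1 - 1 + 1 = v.1 := by ring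
      rw [he] at hflip
      by_contra hB
      exact hv (hflip.mpr hB)
    · intro v _
      refine Prod.ext_iff.mpr ⟨?_, rfl⟩
      show v.1 + 1 - 1 = v.1
      ring
    · intro v _
      refine Prod.ext_iff.mpr ⟨?_, rfl⟩
      show v.1 - 1 + 1 = v.1
      ring
  have hsplit := Finset.card_filter_add_card_filter_not
    (s := (Finset.univ : Finset (Site L))) (p := fun v => isEvenSite L v)
  have huniv : (Finset.univ : Finset (Site L)).card = L * L := by
    rw [Finset.card_univ]
    rw [show Fintype.card (Site L) = Fintype.card (ZMod L) * Fintype.card (ZMod L) from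
      Fintype.card_prod _ _]
    rw [ZMod.card]
  omega

lemma energy_eCfg [NeZero L] :
    energy L (eCfg L) = -(((Finset.univ.filter (fun v : Site L => isEvenSite L v)).card : ℤ)) := by
  rw [energy_eq_card]
  have hfe : (Finset.univ.filter (fun v : Site L => eCfg L v = true))
      = Finset.univ.filter (fun v : Site L => isEvenSite L v) := by
    apply Finset.filter_congr
    intro v _
    simp [eCfg]
  rw [hfe]

lemma fullCol_of_max [NeZero L] (hL2 : 2 ∣ L) (hL6 : 6 ≤ L) {σ : Site L → Bool}
    (hσ : IsConfig L σ) (c : ZMod L) (hmax : 2 * colOcc L σ c = L) :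
    ∃ b, fullCol L b σ c := by
  set T := Finset.univ.filter (fun y : ZMod L => σ (c, y) = true) with hTdef
  have hind : ∀ y ∈ T, y + 1 ∉ T := by
    intro y hy hy1
    rw [hTdef, Finset.mem_filter] at hy hy1
    exact hσ (c, y) (c, y + 1) (adjacent_up (c, y)) ⟨hy.2, hy1.2⟩
  obtain ⟨hle, hstep⟩ := cycle_indep_card T hind
  have hstep2 := hstep hmax
  have hTne : T.Nonempty := by
    rw [← Finset.card_pos]
    have hcc : colOcc L σ c = T.card := rfl
    omega
  obtain ⟨y₀, hy₀⟩ := hTne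
  have hiter : ∀ n : ℕ, y₀ + ((2 * n : ℕ) : ZMod L) ∈ T := by
    intro n
    induction n with
    | zero => simpa using hy₀
    | succ m ih =>
      have he : y₀ + ((2 * (m + 1) : ℕ) : ZMod L) = (y₀ + ((2 * m : ℕ) : ZMod L)) + 2 := by
        push_cast
        ring
      rw [he]
      exact hstep2 _ ih
  have hpar : ∀ y : ZMod L, pv y = pv y₀ → y ∈ T := by
    intro y hy
    have h0 : pv (y - y₀) = 0 := by
      have h1 := pv_add hL2 (y - y₀) y₀
      have he : y - y₀ + y₀ = y := by ring
      rw [he] at h1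
      have h2 := pv_lt (y - y₀)
      have h3 := pv_lt y₀
      omega
    obtain ⟨m, hm⟩ := Nat.dvd_of_mod_eq_zero h0
    have h3 : y = y₀ + ((2 * m : ℕ) : ZMod L) := by
      rw [← hm, ZMod.natCast_zmod_val]
      ring
    rw [h3]
    exact hiter m
  refine ⟨decide (isEvenSite L (c, y₀)), ?_⟩
  intro y hy
  have hyT : y ∈ T := by
    apply hpar
    unfold occT at hy
    rw [decide_eq_true_iff] at hy
    rw [isEvenSite_iff_pv, isEvenSite_iff_pv] at hy
    have ha := pv_add hL2 c y
    have hb := pv_add hL2 c y₀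
    have hc1 := pv_lt c
    have hc2 := pv_lt y
    have hc3 := pv_lt y₀
    by_cases h : pv ((c, y).1 + (c, y).2) = 0
    · have h' := hy.mp h
      simp only at h h' ⊢
      omega
    · have h' : ¬ pv ((c, y₀).1 + (c, y₀).2) = 0 := fun hh => h (hy.mpr hh)
      simp only at h h' ⊢
      omega
  rw [hTdef, Finset.mem_filter] at hyT
  exact hyT.2

lemma exists_boundary_col [NeZero L] {b : Bool} {σ : Site L → Bool}
    (hfc : ∃ c, fullCol L b σ c) (hnall : ¬ ∀ c, fullCol L b σ c) :
    ∃ c, fullCol L b σ c ∧ ¬ fullCol L b σ (c + 1) := by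
  by_contra h
  push_neg at h
  obtain ⟨c₀, hc₀⟩ := hfc
  have hiter : ∀ n : ℕ, fullCol L b σ (c₀ + (n : ZMod L)) := by
    intro n
    induction n with
    | zero => simpa using hc₀
    | succ m ih =>
      have he : c₀ + ((m + 1 : ℕ) : ZMod L) = (c₀ + ((m : ℕ) : ZMod L)) + 1 := by
        push_cast
        ring
      rw [he]
      exact h _ ih
  apply hnall
  intro c
  have he : c = c₀ + (((c - c₀).val : ℕ) : ZMod L) := by
    rw [ZMod.natCast_zmod_val]
    ring
  rw [he]
  exact hiter _

lemma defect_zero_of_all [NeZero L] {b : Bool} {σ : Site L → Bool}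
    (h : ∀ c, fullCol L b σ c) : defect L b σ = 0 := by
  unfold defect
  rw [Finset.card_eq_zero, Finset.eq_empty_iff_forall_notMem]
  intro v hv
  simp only [Finset.mem_filter, Finset.mem_univ, true_and] at hv
  have h2 : σ (v.1, v.2) = true := h v.1 v.2 hv.1
  rw [show ((v.1, v.2) : Site L) = v from rfl] at h2
  rw [h2] at hv
  simp at hv

lemma defect_zero_eq [NeZero L] (hL2 : 2 ∣ L) (hL6 : 6 ≤ L) (b : Bool) {σ : Site L → Bool}
    (hσ : IsConfig L σ) (hd : defect L b σ = 0) : σ = tCfg L b := by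
  have hall : ∀ v : Site L, occT L b v → σ v = true := by
    intro v hv
    by_contra h
    have hvf : σ v = false := by cases hvv : σ v; rfl; exact absurd hvv h
    have hmem : v ∈ Finset.univ.filter (fun v : Site L => occT L b v ∧ σ v = false) := by
      simp only [Finset.mem_filter, Finset.mem_univ, true_and]
      exact ⟨hv, hvf⟩
    unfold defect at hd
    rw [Finset.card_eq_zero] at hd
    rw [hd] at hmem
    exact absurd hmem (Finset.notMem_empty v)
  funext v
  by_cases hv : occT L b v
  · rw [hall v hv]
    simp [tCfg, hv]
  · have hw : occT L b (v.1 + 1, v.2) := by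
      rw [occT_flip hL2 hL6]
      exact hv
    have hw2 : σ (v.1 + 1, v.2) = true := hall _ hw
    have h4 : σ v = false := empty_of_nbr hσ (adjacent_right v) hw2
    rw [h4]
    simp [tCfg, hv]

end Aux2

section Aux3

variable {L : ℕ}

lemma nbrs_empty [NeZero L] (hL2 : 2 ∣ L) (hL6 : 6 ≤ L) {b : Bool} {σ : Site L → Bool}
    (hσ : IsConfig L σ) {c : ZMod L} (hc : fullCol L b σ c) {y : ZMod L}
    (hz : occT L b (c + 1, y)) :
    σ (c, y) = false ∧ σ (c + 1, y + 1) = false ∧ σ (c + 1, y - 1) = false := by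
  have h1 : occT L b (c, y + 1) := by
    refine (occT_congr hL2 b ?_).mpr hz
    show pv (c + (y + 1)) = pv ((c + 1) + y)
    rw [show c + (y + 1) = (c + 1) + y by ring]
  have h1' : σ (c, y + 1) = true := hc (y + 1) h1
  have h2 : occT L b (c, y - 1) := by
    refine (occT_congr hL2 b ?_).mpr hz
    show pv (c + (y - 1)) = pv ((c + 1) + y)
    have ha := pv_add hL2 (c + (y - 1)) 1
    have hb := pv_add hL2 (c + (y - 1) + 1) 1
    rw [show c + (y - 1) + 1 + 1 = (c + 1) + y by ring] at hb
    rw [pv_one hL6] at ha hb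
    have e1 := pv_lt (c + (y - 1))
    have e2 := pv_lt (c + (y - 1) + 1)
    have e3 := pv_lt ((c + 1) + y)
    omega
  have h2' : σ (c, y - 1) = true := hc (y - 1) h2
  refine ⟨?_, ?_, ?_⟩
  · exact empty_of_nbr hσ (adjacent_up (c, y)) h1'
  · exact empty_of_nbr hσ (adjacent_symm (adjacent_right (c, y + 1))) h1'
  · exact empty_of_nbr hσ (adjacent_symm (adjacent_right (c, y - 1))) h2'

lemma descend [NeZero L] (hL2 : 2 ∣ L) (hL6 : 6 ≤ L) (b : Bool) :
    ∀ n (σ : Site L → Bool), IsConfig L σ → (∃ c, fullCol L b σ c) → defect L b σ ≤ n →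
    ∃ ω, IsPathFrom L ω σ (tCfg L b) ∧ ∀ ξ ∈ ω, energy L ξ ≤ energy L σ + 1 := by
  intro n
  induction n with
  | zero =>
    intro σ hσ hfc hd
    have hσt : σ = tCfg L b := defect_zero_eq hL2 hL6 b hσ (Nat.le_zero.mp hd)
    refine ⟨[σ], ⟨⟨?_, ?_⟩, ?_, ?_⟩, ?_⟩
    · intro ξ hξ
      rw [List.mem_singleton] at hξ
      rw [hξ]
      exact hσ
    · exact List.isChain_singleton σ
    · rfl
    · simp [hσt]
    · intro ξ hξ
      rw [List.mem_singleton] at hξ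
      rw [hξ]
      omega
  | succ n ih =>
    intro σ hσ hfc hd
    by_cases hz0 : defect L b σ = 0
    · have hσt : σ = tCfg L b := defect_zero_eq hL2 hL6 b hσ hz0
      refine ⟨[σ], ⟨⟨?_, ?_⟩, ?_, ?_⟩, ?_⟩
      · intro ξ hξ
        rw [List.mem_singleton] at hξ
        rw [hξ]
        exact hσ
      · exact List.isChain_singleton σ
      · rfl
      · simp [hσt]
      · intro ξ hξ
        rw [List.mem_singleton] at hξ
        rw [hξ]
        omega
    · have hnall : ¬ ∀ c, fullCol L b σ c := fun h => hz0 (defect_zero_of_all h)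
      obtain ⟨c, hc, hc1⟩ := exists_boundary_col hfc hnall
      unfold fullCol at hc1
      push_neg at hc1
      obtain ⟨y, hy, hyf'⟩ := hc1
      have hyf : σ (c + 1, y) = false := by
        cases hvv : σ (c + 1, y)
        · rfl
        · exact absurd hvv hyf'
      obtain ⟨f1, f2, f3⟩ := nbrs_empty hL2 hL6 hσ hc hy
      have hz_ne_u : ((c + 1, y) : Site L) ≠ (c + 1 + 1, y) := by
        intro h
        have h1 := (Prod.ext_iff.mp h).1
        exact one_ne_zero' hL6 (left_eq_add.mp h1)
      have hcy_ne_z : ∀ y' : ZMod L, ((c, y') : Site L) ≠ (c + 1, y) := by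
        intro y' h
        have h1 := (Prod.ext_iff.mp h).1
        exact one_ne_zero' hL6 (left_eq_add.mp h1)
      have hcy_ne_u : ∀ y' : ZMod L, ((c, y') : Site L) ≠ (c + 1 + 1, y) := by
        intro y' h
        have h1 := (Prod.ext_iff.mp h).1
        have h2 : c = c + 2 := by linear_combination h1
        exact two_ne_zero' hL6 (left_eq_add.mp h2)
      have hnbr : ∀ w, adjacent L ((c + 1, y) : Site L) w →
          w = ((c + 1 + 1, y) : Site L) ∨ σ w = false := by
        intro w hw
        rcases adjacent_cases hw with h | h | h | h
        · left
          exact h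
        · right
          rw [h]
          show σ (c + 1 - 1, y) = false
          rw [show c + 1 - 1 = c by ring]
          exact f1
        · right
          rw [h]
          exact f2
        · right
          rw [h]
          exact f3
      cases hu : σ ((c + 1 + 1, y) : Site L) with
      | false =>
        set σ₁ := Function.update σ ((c + 1, y) : Site L) true with hσ₁def
        have hz_nbrs : ∀ w, adjacent L ((c + 1, y) : Site L) w → σ w = false := by
          intro w hw
          rcases hnbr w hw with h | h
          · rw [h]
            exact hu
          · exact h
        have hσ₁ : IsConfig L σ₁ := config_update_true hσ _ hz_nbrs (not_adjacent_self hL6 _)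
        have hen₁ : energy L σ₁ = energy L σ - 1 := energy_update_true σ _ hyf
        have hfc₁ : fullCol L b σ₁ c := by
          intro y' hy'
          rw [hσ₁def, Function.update_of_ne (hcy_ne_z y')]
          exact hc y' hy'
        have hdef₁ : defect L b σ₁ < defect L b σ := by
          apply Finset.card_lt_card
          constructor
          · intro v hv
            simp only [Finset.mem_filter, Finset.mem_univ, true_and] at hv ⊢
            refine ⟨hv.1, ?_⟩
            have h2 := hv.2
            by_cases hvz : v = ((c + 1, y) : Site L)
            · rw [hσ₁def, hvz, Function.update_self] at h2
              exact absurd h2 (by simp)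
            · rwa [hσ₁def, Function.update_of_ne hvz] at h2
          · intro hsup
            have hzmem : ((c + 1, y) : Site L) ∈ Finset.univ.filter
                (fun v : Site L => occT L b v ∧ σ v = false) := by
              simp only [Finset.mem_filter, Finset.mem_univ, true_and]
              exact ⟨hy, hyf⟩
            have h3 := hsup hzmem
            simp only [Finset.mem_filter, Finset.mem_univ, true_and] at h3
            rw [hσ₁def, Function.update_self] at h3
            simp at h3
        obtain ⟨ω₁, ⟨⟨hcfg₁, hch₁⟩, hhd₁, hlast₁⟩, hbd₁⟩ := ih σ₁ hσ₁ ⟨c, hfc₁⟩ (by omega)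
        refine ⟨σ :: ω₁, ⟨⟨?_, ?_⟩, ?_, ?_⟩, ?_⟩
        · intro ξ hξ
          rcases List.mem_cons.mp hξ with h | h
          · rw [h]
            exact hσ
          · exact hcfg₁ ξ h
        · rw [show List.Chain' (stepRel L) (σ :: ω₁) = List.IsChain (stepRel L) (σ :: ω₁) from rfl, List.isChain_cons]
          refine ⟨?_, hch₁⟩
          intro x hx
          rw [hhd₁, Option.mem_some_iff] at hx
          subst hx
          exact stepRel_update σ _ true
        · rfl
        · obtain ⟨x, t, rfl⟩ : ∃ x t, ω₁ = x :: t := by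
            cases ω₁ with
            | nil => simp at hhd₁
            | cons x t => exact ⟨x, t, rfl⟩
          rw [List.getLast?_cons_cons]
          exact hlast₁
        · intro ξ hξ
          rcases List.mem_cons.mp hξ with h | h
          · rw [h]
            omega
          · have := hbd₁ ξ h
            omega
      | true =>
        set σ₁ := Function.update σ ((c + 1 + 1, y) : Site L) false with hσ₁def
        set σ₂ := Function.update σ₁ ((c + 1, y) : Site L) true with hσ₂def
        have hσ₁ : IsConfig L σ₁ := config_update_false hσ _
        have hσ₁z : σ₁ ((c + 1, y) : Site L) = false := by
          rw [hσ₁def, Function.update_of_ne hz_ne_u]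
          exact hyf
        have hz_nbrs₁ : ∀ w, adjacent L ((c + 1, y) : Site L) w → σ₁ w = false := by
          intro w hw
          rcases hnbr w hw with h | h
          · rw [h, hσ₁def, Function.update_self]
          · by_cases hwu : w = ((c + 1 + 1, y) : Site L)
            · rw [hwu, hσ₁def, Function.update_self]
            · rw [hσ₁def, Function.update_of_ne hwu]
              exact h
        have hσ₂ : IsConfig L σ₂ := config_update_true hσ₁ _ hz_nbrs₁ (not_adjacent_self hL6 _)
        have hen₁ : energy L σ₁ = energy L σ + 1 := energy_update_false σ _ hu
        have hen₂ : energy L σ₂ = energy L σ₁ - 1 := energy_update_true σ₁ _ hσ₁z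
        have hnocc_u : ¬ occT L b ((c + 1 + 1, y) : Site L) :=
          fun h => ((occT_flip hL2 hL6 b (c + 1) y).mp h) hy
        have hfc₂ : fullCol L b σ₂ c := by
          intro y' hy'
          rw [hσ₂def, Function.update_of_ne (hcy_ne_z y'), hσ₁def,
            Function.update_of_ne (hcy_ne_u y')]
          exact hc y' hy'
        have hdef₂ : defect L b σ₂ < defect L b σ := by
          apply Finset.card_lt_card
          constructor
          · intro v hv
            simp only [Finset.mem_filter, Finset.mem_univ, true_and] at hv ⊢
            refine ⟨hv.1, ?_⟩
            have h2 := hv.2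
            by_cases hvz : v = ((c + 1, y) : Site L)
            · rw [hσ₂def, hvz, Function.update_self] at h2
              exact absurd h2 (by simp)
            · rw [hσ₂def, Function.update_of_ne hvz] at h2
              by_cases hvu : v = ((c + 1 + 1, y) : Site L)
              · exact absurd hv.1 (by rw [hvu]; exact hnocc_u)
              · rwa [hσ₁def, Function.update_of_ne hvu] at h2
          · intro hsup
            have hzmem : ((c + 1, y) : Site L) ∈ Finset.univ.filter
                (fun v : Site L => occT L b v ∧ σ v = false) := by
              simp only [Finset.mem_filter, Finset.mem_univ, true_and]
              exact ⟨hy, hyf⟩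
            have h3 := hsup hzmem
            simp only [Finset.mem_filter, Finset.mem_univ, true_and] at h3
            rw [hσ₂def, Function.update_self] at h3
            simp at h3
        obtain ⟨ω₂, ⟨⟨hcfg₂, hch₂⟩, hhd₂, hlast₂⟩, hbd₂⟩ := ih σ₂ hσ₂ ⟨c, hfc₂⟩ (by omega)
        refine ⟨σ :: σ₁ :: ω₂, ⟨⟨?_, ?_⟩, ?_, ?_⟩, ?_⟩
        · intro ξ hξ
          rcases List.mem_cons.mp hξ with h | h
          · rw [h]
            exact hσ
          · rcases List.mem_cons.mp h with h' | h'
            · rw [h']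
              exact hσ₁
            · exact hcfg₂ ξ h'
        · rw [show List.Chain' (stepRel L) (σ :: σ₁ :: ω₂) = List.IsChain (stepRel L) (σ :: σ₁ :: ω₂) from rfl, List.isChain_cons_cons]
          refine ⟨stepRel_update σ _ false, ?_⟩
          rw [List.isChain_cons]
          refine ⟨?_, hch₂⟩
          intro x hx
          rw [hhd₂, Option.mem_some_iff] at hx
          subst hx
          exact stepRel_update σ₁ _ true
        · rfl
        · obtain ⟨x, t, rfl⟩ : ∃ x t, ω₂ = x :: t := by
            cases ω₂ with
            | nil => simp at hhd₂
            | cons x t => exact ⟨x, t, rfl⟩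
          rw [List.getLast?_cons_cons, List.getLast?_cons_cons]
          exact hlast₂
        · intro ξ hξ
          rcases List.mem_cons.mp hξ with h | h
          · rw [h]
            omega
          · rcases List.mem_cons.mp h with h' | h'
            · rw [h']
              omega
            · have := hbd₂ ξ h'
              omega

lemma colOcc_le [NeZero L] {σ : Site L → Bool} (hσ : IsConfig L σ) (c : ZMod L) :
    2 * colOcc L σ c ≤ L := by
  have hind : ∀ y ∈ Finset.univ.filter (fun y : ZMod L => σ (c, y) = true),
      y + 1 ∉ Finset.univ.filter (fun y : ZMod L => σ (c, y) = true) := by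
    intro y hy hy1
    rw [Finset.mem_filter] at hy hy1
    exact hσ (c, y) (c, y + 1) (adjacent_up (c, y)) ⟨hy.2, hy1.2⟩
  exact (cycle_indep_card _ hind).1

end Aux3

/-- **Configurations with `ΔH < L` belong to one of the initial cycles.**
If `ΔH(σ) < L` then there is a path from `σ` to `e` or to `o` with
`Φ_ω ≤ H(σ) + 1`; in particular `Φ(σ,e) < H(e)+L+1` or `Φ(σ,o) < H(e)+L+1`,
i.e. `σ ∈ C_e` or `σ ∈ C_o`. -/
theorem low_energy_in_initial_cycle (L : ℕ) (hL : Even L) (hL6 : 6 ≤ L)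
    (σ : Site L → Bool) (hσ : IsConfig L σ)
    (hΔ : energy L σ - energy L (eCfg L) < (L : ℤ)) :
    (∃ ω, (IsPathFrom L ω σ (eCfg L) ∨ IsPathFrom L ω σ (oCfg L)) ∧
       ∀ ξ ∈ ω, energy L ξ ≤ energy L σ + 1) ∧
    ((∃ ω, IsPathFrom L ω σ (eCfg L) ∧
        ∀ ξ ∈ ω, energy L ξ < energy L (eCfg L) + (L : ℤ) + 1) ∨
     (∃ ω, IsPathFrom L ω σ (oCfg L) ∧
        ∀ ξ ∈ ω, energy L ξ < energy L (eCfg L) + (L : ℤ) + 1)) := by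
  haveI : NeZero L := ⟨by omega⟩
  have hL2 : 2 ∣ L := hL.two_dvd
  have hfull : ∃ b c, fullCol L b σ c := by
    by_contra hno
    push_neg at hno
    have hcol : ∀ c : ZMod L, 2 * colOcc L σ c + 2 ≤ L := by
      intro c
      have h1 := colOcc_le hσ c
      rcases eq_or_lt_of_le h1 with heq | hlt
      · obtain ⟨b, hb⟩ := fullCol_of_max hL2 hL6 hσ c heq
        exact absurd hb (hno b c)
      · obtain ⟨k, hk⟩ := hL2
        omega
    have hsum := card_occ_eq_sum (L := L) σ
    have h4 : ∑ c : ZMod L, (2 * colOcc L σ c + 2) ≤ ∑ _c : ZMod L, L :=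
      Finset.sum_le_sum (fun c _ => hcol c)
    have h5 : ∑ _c : ZMod L, L = L * L := by
      rw [Finset.sum_const, Finset.card_univ, ZMod.card, smul_eq_mul]
    have h6 : ∑ c : ZMod L, (2 * colOcc L σ c + 2)
        = 2 * (∑ c : ZMod L, colOcc L σ c) + 2 * L := by
      rw [Finset.sum_add_distrib, ← Finset.mul_sum]
      congr 1
      rw [Finset.sum_const, Finset.card_univ, ZMod.card, smul_eq_mul]
      ring
    have hE := two_mul_card_even (L := L) hL2 hL6
    have he1 := energy_eq_card (L := L) σ
    have he2 := energy_eCfg (L := L)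
    rw [he1, he2] at hΔ
    omega
  obtain ⟨b, cc, hbc⟩ := hfull
  obtain ⟨ω, hpath, hbound⟩ := descend hL2 hL6 b (defect L b σ) σ hσ ⟨cc, hbc⟩ le_rfl
  have hb2 : ∀ ξ ∈ ω, energy L ξ < energy L (eCfg L) + (L : ℤ) + 1 := by
    intro ξ hξ
    have h1 := hbound ξ hξ
    omega
  constructor
  · cases b with
    | false => exact ⟨ω, Or.inr (by rwa [tCfg_false] at hpath), hbound⟩
    | true => exact ⟨ω, Or.inl (by rwa [tCfg_true] at hpath), hbound⟩
  · cases b with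
    | false => exact Or.inr ⟨ω, by rwa [tCfg_false] at hpath, hb2⟩
    | true => exact Or.inl ⟨ω, by rwa [tCfg_true] at hpath, hb2⟩

end HardCoreGrid
end

section
/- Fix an even integer L ≥ 6 and let Λ be the L×L toric grid graph. For every configuration η ∈ C_ir(e,o) there exists a non-backtracking path ω from e to η, with consecutive configurations differing in exactly one site, such that H(ξ) < H(η) for every configuration ξ in ω other than η (so the maximum of the energy along ω is attained only at η, and Φ_ω = H(η) = H(e)+L+1 = Φ(e,o), i.e. ω is an initial segment of an optimal path). -/
namespace HardCoreGrid

/-! ### Auxiliary machinery for the proof -/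

section AuxProof

variable {L : ℕ}

lemma natCast_inj_of_lt {a b : ℕ} (ha : a < L) (hb : b < L)
    (h : (a : ZMod L) = (b : ZMod L)) : a = b := by
  haveI : NeZero L := ⟨by omega⟩
  have h2 := congrArg ZMod.val h
  rwa [ZMod.val_cast_of_lt ha, ZMod.val_cast_of_lt hb] at h2

lemma val_add_natCast_mod_two (hL : Even L) (hL0 : 0 < L) (a : ZMod L) (n : ℕ) :
    (a + (n : ZMod L)).val % 2 = (a.val + n) % 2 := by
  haveI : NeZero L := ⟨by omega⟩
  obtain ⟨t, ht⟩ := hL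
  have h2 : 2 ∣ L := ⟨t, by omega⟩
  rw [ZMod.val_add, ZMod.val_natCast]
  have e1 : (a.val + n % L) % L % 2 = (a.val + n % L) % 2 := Nat.mod_mod_of_dvd _ h2
  have e2 : n % L % 2 = n % 2 := Nat.mod_mod_of_dvd _ h2
  rw [e1]
  set s := n % L with hs
  omega

lemma isEvenSite_shift (hL : Even L) (hL0 : 0 < L) {v w : Site L} (n : ℕ)
    (h : w.1 + w.2 = v.1 + v.2 + (n : ZMod L)) :
    isEvenSite L w ↔ ((v.1 + v.2).val + n) % 2 = 0 := by
  unfold isEvenSite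
  rw [h, val_add_natCast_mod_two hL hL0]

lemma isEvenSite_shift_even (hL : Even L) (hL0 : 0 < L) {v w : Site L} {n : ℕ}
    (hn : n % 2 = 0) (h : w.1 + w.2 = v.1 + v.2 + (n : ZMod L)) :
    isEvenSite L w ↔ isEvenSite L v := by
  rw [isEvenSite_shift hL hL0 n h]; unfold isEvenSite; omega

lemma isEvenSite_shift_odd (hL : Even L) (hL0 : 0 < L) {v w : Site L} {n : ℕ}
    (hn : n % 2 = 1) (h : w.1 + w.2 = v.1 + v.2 + (n : ZMod L)) :
    isEvenSite L w ↔ ¬ isEvenSite L v := by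
  rw [isEvenSite_shift hL hL0 n h]; unfold isEvenSite; omega

lemma adjacent_parity (hL : Even L) (hL0 : 0 < L) {v w : Site L} (h : adjacent L v w) :
    (isEvenSite L v ↔ ¬ isEvenSite L w) := by
  have flip : ∀ a b : Site L, b.1 + b.2 = a.1 + a.2 + ((1 : ℕ) : ZMod L) →
      (isEvenSite L b ↔ ¬ isEvenSite L a) := fun a b hb =>
    isEvenSite_shift_odd hL hL0 (by norm_num) hb
  rcases h with ⟨h1, h2 | h2⟩ | ⟨h1, h2 | h2⟩
  · exact flip w v (by rw [h2, h1]; push_cast; ring)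
  · have := flip v w (by rw [h2, h1]; push_cast; ring); tauto
  · exact flip w v (by rw [h2, h1]; push_cast; ring)
  · have := flip v w (by rw [h2, h1]; push_cast; ring); tauto

lemma isConfig_eCfg (hL : Even L) (hL0 : 0 < L) : IsConfig L (eCfg L) := by
  intro v w hadj hvw
  have h1 : isEvenSite L v := by simpa [eCfg] using hvw.1
  have h2 : isEvenSite L w := by simpa [eCfg] using hvw.2
  exact (adjacent_parity hL hL0 hadj).1 h1 h2

/-! #### Configurations from a set of removed even sites and added odd sites -/

open Classical in
noncomputable def cfgAB (L : ℕ) (A B : Set (Site L)) : Site L → Bool :=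
  fun w => if w ∈ B then true else if w ∈ A then false else eCfg L w

lemma cfgAB_empty : cfgAB L ∅ ∅ = eCfg L := by
  funext w; simp [cfgAB]

lemma cfgAB_even_mem {A B : Set (Site L)} {w : Site L} (h : w ∈ A) (hwB : w ∉ B) :
    cfgAB L A B w = false := by
  unfold cfgAB; rw [if_neg hwB, if_pos h]

lemma cfgAB_even_not {A B : Set (Site L)} {w : Site L} (hw : isEvenSite L w)
    (h : w ∉ A) (hwB : w ∉ B) : cfgAB L A B w = true := by
  unfold cfgAB; rw [if_neg hwB, if_neg h]; simp [eCfg, hw]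

lemma cfgAB_odd_mem {A B : Set (Site L)} {w : Site L} (h : w ∈ B) :
    cfgAB L A B w = true := by
  unfold cfgAB; rw [if_pos h]

lemma cfgAB_odd_not {A B : Set (Site L)} {w : Site L} (hw : ¬ isEvenSite L w)
    (hwA : w ∉ A) (h : w ∉ B) : cfgAB L A B w = false := by
  unfold cfgAB; rw [if_neg h, if_neg hwA]; simp [eCfg, hw]

lemma evenOcc_cfgAB {A B : Set (Site L)} (hA : A ⊆ Ve L) (hB : B ⊆ Vo L) :
    {v : Site L | v ∈ Ve L ∧ cfgAB L A B v = true} = Ve L \ A := by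
  ext w
  by_cases hw : isEvenSite L w
  · have hwB : w ∉ B := fun h => hB h hw
    simp only [Set.mem_setOf_eq, Set.mem_diff]
    constructor
    · rintro ⟨h1, h2⟩
      refine ⟨h1, fun hwA => ?_⟩
      rw [cfgAB_even_mem hwA hwB] at h2; cases h2
    · rintro ⟨h1, h2⟩
      exact ⟨h1, cfgAB_even_not hw h2 hwB⟩
  · constructor
    · rintro ⟨h1, -⟩; exact absurd h1 hw
    · rintro ⟨h1, -⟩; exact absurd h1 hw

lemma oddOcc_cfgAB {A B : Set (Site L)} (hA : A ⊆ Ve L) (hB : B ⊆ Vo L) :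
    {v : Site L | v ∈ Vo L ∧ cfgAB L A B v = true} = B := by
  ext w
  by_cases hw : isEvenSite L w
  · constructor
    · rintro ⟨h1, -⟩; exact absurd hw h1
    · intro h; exact absurd hw (hB h)
  · have hwA : w ∉ A := fun h => hw (hA h)
    simp only [Set.mem_setOf_eq]
    constructor
    · rintro ⟨-, h2⟩
      by_contra hwB
      rw [cfgAB_odd_not hw hwA hwB] at h2; cases h2
    · intro h; exact ⟨hw, cfgAB_odd_mem h⟩

lemma occ_cfgAB {A B : Set (Site L)} (hA : A ⊆ Ve L) (hB : B ⊆ Vo L) :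
    {v : Site L | cfgAB L A B v = true} = (Ve L \ A) ∪ B := by
  ext w
  by_cases hw : isEvenSite L w
  · have hwB : w ∉ B := fun h => hB h hw
    simp only [Set.mem_setOf_eq, Set.mem_union, Set.mem_diff]
    constructor
    · intro h2
      left
      refine ⟨hw, fun hwA => ?_⟩
      rw [cfgAB_even_mem hwA hwB] at h2; cases h2
    · rintro (⟨-, h2⟩ | h2)
      · exact cfgAB_even_not hw h2 hwB
      · exact absurd h2 hwB
  · have hwA : w ∉ A := fun h => hw (hA h)
    simp only [Set.mem_setOf_eq, Set.mem_union, Set.mem_diff]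
    constructor
    · intro h2
      right
      by_contra hwB
      rw [cfgAB_odd_not hw hwA hwB] at h2; cases h2
    · rintro (⟨h1, -⟩ | h2)
      · exact absurd h1 hw
      · exact cfgAB_odd_mem h2

lemma energy_cfgAB [NeZero L] {A B : Set (Site L)} (hA : A ⊆ Ve L) (hB : B ⊆ Vo L) :
    energy L (cfgAB L A B) = -(((Ve L \ A).ncard : ℤ) + (B.ncard : ℤ)) := by
  unfold energy
  rw [occ_cfgAB hA hB, Set.ncard_union_eq
    (Set.disjoint_left.2 fun x hx hxB => (hB hxB) hx.1)]
  push_cast; ring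

lemma mval_cfgAB [NeZero L] {A B : Set (Site L)} (hA : A ⊆ Ve L) (hB : B ⊆ Vo L) :
    mval L (cfgAB L A B) = (B.ncard : ℤ) - ((Ve L \ A).ncard : ℤ) := by
  unfold mval nOddOcc nEvenOcc
  rw [evenOcc_cfgAB hA hB, oddOcc_cfgAB hA hB]

lemma isConfig_mono {σ σ' : Site L → Bool} (h : IsConfig L σ)
    (hle : ∀ v, σ' v = true → σ v = true) : IsConfig L σ' :=
  fun v w hadj hvw => h v w hadj ⟨hle _ hvw.1, hle _ hvw.2⟩

lemma step_even_pkg [NeZero L] {A B : Set (Site L)} (hA : A ⊆ Ve L) (hB : B ⊆ Vo L)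
    {m : Site L} (hm : isEvenSite L m) (hmA : m ∉ A) :
    stepRel1 L (cfgAB L A B) (cfgAB L (insert m A) B) ∧
    (IsConfig L (cfgAB L A B) → IsConfig L (cfgAB L (insert m A) B)) ∧
    mval L (cfgAB L A B) + 1 = mval L (cfgAB L (insert m A) B) ∧
    energy L (cfgAB L (insert m A) B) = energy L (cfgAB L A B) + 1 := by
  have hA' : insert m A ⊆ Ve L := Set.insert_subset hm hA
  have hmB : m ∉ B := fun h => (hB h) hm
  have hval_old : cfgAB L A B m = true := cfgAB_even_not hm hmA hmB
  have hval_new : cfgAB L (insert m A) B m = false :=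
    cfgAB_even_mem (Set.mem_insert m A) hmB
  have hother : ∀ w, w ≠ m → cfgAB L (insert m A) B w = cfgAB L A B w := by
    intro w hw
    have hmem : (w ∈ insert m A) = (w ∈ A) := by simp [Set.mem_insert_iff, hw]
    unfold cfgAB
    rw [hmem]
  have hcard : (Ve L \ insert m A).ncard + 1 = (Ve L \ A).ncard := by
    have h1 : Ve L \ insert m A = (Ve L \ A) \ {m} := by
      ext x; simp only [Set.mem_diff, Set.mem_insert_iff, Set.mem_singleton_iff]; tauto
    rw [h1]
    exact Set.ncard_diff_singleton_add_one ⟨hm, hmA⟩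
  refine ⟨⟨m, by rw [hval_old, hval_new]; simp, ?_⟩, ?_, ?_, ?_⟩
  · intro w hw; by_contra hne; exact hw (hother w hne).symm
  · intro hcfg
    refine isConfig_mono hcfg ?_
    intro v hv
    by_cases hvm : v = m
    · rw [hvm, hval_new] at hv; cases hv
    · rw [hother v hvm] at hv; exact hv
  · rw [mval_cfgAB hA hB, mval_cfgAB hA' hB]; omega
  · rw [energy_cfgAB hA hB, energy_cfgAB hA' hB]; omega

lemma step_odd_pkg [NeZero L] {A B : Set (Site L)} (hA : A ⊆ Ve L) (hB : B ⊆ Vo L)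
    {m : Site L} (hm : ¬ isEvenSite L m) (hmB : m ∉ B)
    (hnbr : ∀ w, adjacent L m w → w ∈ A) :
    stepRel1 L (cfgAB L A B) (cfgAB L A (insert m B)) ∧
    (IsConfig L (cfgAB L A B) → IsConfig L (cfgAB L A (insert m B))) ∧
    mval L (cfgAB L A B) + 1 = mval L (cfgAB L A (insert m B)) ∧
    energy L (cfgAB L A (insert m B)) + 1 = energy L (cfgAB L A B) := by
  have hB' : insert m B ⊆ Vo L := Set.insert_subset hm hB
  have hmA : m ∉ A := fun h => hm (hA h)
  have hval_old : cfgAB L A B m = false := cfgAB_odd_not hm hmA hmB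
  have hval_new : cfgAB L A (insert m B) m = true :=
    cfgAB_odd_mem (Set.mem_insert m B)
  have hother : ∀ w, w ≠ m → cfgAB L A (insert m B) w = cfgAB L A B w := by
    intro w hw
    have hmem : (w ∈ insert m B) = (w ∈ B) := by simp [Set.mem_insert_iff, hw]
    unfold cfgAB
    rw [hmem]
  have hcard : (insert m B).ncard = B.ncard + 1 := Set.ncard_insert_of_notMem hmB
  refine ⟨⟨m, by rw [hval_old, hval_new]; simp, ?_⟩, ?_, ?_, ?_⟩
  · intro w hw; by_contra hne; exact hw (hother w hne).symm
  · intro hcfg a b hadj hab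
    by_cases ham : a = m
    · subst ham
      have hbA : b ∈ A := hnbr b hadj
      have hbB : b ∉ insert a B := fun h => (hB' h) (hA hbA)
      have : cfgAB L A (insert a B) b = false := cfgAB_even_mem hbA hbB
      rw [this] at hab; exact absurd hab.2 (by simp)
    · by_cases hbm : b = m
      · subst hbm
        have haA : a ∈ A := hnbr a (adjacent_symm hadj)
        have haB : a ∉ insert b B := fun h => (hB' h) (hA haA)
        have : cfgAB L A (insert b B) a = false := cfgAB_even_mem haA haB
        rw [this] at hab; exact absurd hab.1 (by simp)
      · exact hcfg a b hadj ⟨(hother a ham) ▸ hab.1, (hother b hbm) ▸ hab.2⟩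
  · rw [mval_cfgAB hA hB, mval_cfgAB hA hB']; omega
  · rw [energy_cfgAB hA hB, energy_cfgAB hA hB']; omega

/-! #### Good path segments -/

def goodSeg (L : ℕ) (c : ℤ) (ω : List (Site L → Bool)) (σ τ : Site L → Bool) : Prop :=
  ω.head? = some σ ∧ ω.getLast? = some τ ∧ (∀ ξ ∈ ω, IsConfig L ξ) ∧
  ω.Chain' (stepRel1 L) ∧ ω.Chain' (fun a b => mval L a + 1 = mval L b) ∧
  ∀ ξ ∈ ω, energy L ξ ≤ c

lemma goodSeg_single {c : ℤ} {σ : Site L → Bool} (h : IsConfig L σ)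
    (he : energy L σ ≤ c) : goodSeg L c [σ] σ σ := by
  refine ⟨rfl, rfl, ?_, List.isChain_singleton _, List.isChain_singleton _, ?_⟩
  · intro ξ hξ; simp at hξ; rwa [hξ]
  · intro ξ hξ; simp at hξ; rwa [hξ]

lemma goodSeg_snoc {c : ℤ} {ω : List (Site L → Bool)} {σ τ ρ : Site L → Bool}
    (h : goodSeg L c ω σ τ) (h1 : stepRel1 L τ ρ) (h2 : IsConfig L ρ)
    (h3 : mval L τ + 1 = mval L ρ) (h4 : energy L ρ ≤ c) :
    goodSeg L c (ω ++ [ρ]) σ ρ := by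
  obtain ⟨hh, hl, hc, hch, hm, he⟩ := h
  have hne : ω ≠ [] := by intro h0; rw [h0] at hh; cases hh
  refine ⟨?_, ?_, ?_, ?_, ?_, ?_⟩
  · cases ω with
    | nil => exact absurd rfl hne
    | cons a t => simpa using hh
  · simp [List.getLast?_concat]
  · intro ξ hξ; rcases List.mem_append.1 hξ with h' | h'
    · exact hc ξ h'
    · simp at h'; rw [h']; exact h2
  · refine List.isChain_append.2 ⟨hch, List.isChain_singleton _, ?_⟩
    intro x hx y hy
    rw [hl] at hx; simp at hx hy; subst hx; subst hy; exact h1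
  · refine List.isChain_append.2 ⟨hm, List.isChain_singleton _, ?_⟩
    intro x hx y hy
    rw [hl] at hx; simp at hx hy; subst hx; subst hy; exact h3
  · intro ξ hξ; rcases List.mem_append.1 hξ with h' | h'
    · exact he ξ h'
    · simp at h'; rw [h']; exact h4


/-! #### Rhombus geometry -/

def Opt (L : ℕ) (η₀ : Site L) (k j : ℕ) : Site L :=
  (η₀.1 + (k : ZMod L) + (j : ZMod L), η₀.2 + (k : ZMod L) - (j : ZMod L))

def Ept (L : ℕ) (η₀ : Site L) (p q : ℕ) : Site L :=
  (η₀.1 + (p : ZMod L) + (q : ZMod L) - 1, η₀.2 + (p : ZMod L) - (q : ZMod L))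

def EG (L : ℕ) (η₀ : Site L) (P Q : ℕ) : Set (Site L) :=
  {w | ∃ p ≤ P, ∃ q ≤ Q, w = Ept L η₀ p q}

def OG (L : ℕ) (η₀ : Site L) (K J : ℕ) : Set (Site L) :=
  {w | ∃ k < K, ∃ j < J, w = Opt L η₀ k j}

def Ecol (L : ℕ) (η₀ : Site L) (P J : ℕ) : Set (Site L) :=
  {w | ∃ q ≤ J, w = Ept L η₀ P q}

def Opart (L : ℕ) (η₀ : Site L) (c J : ℕ) : Set (Site L) :=
  {w | ∃ j < J, w = Opt L η₀ c j}

lemma Sset_eq_OG (η₀ : Site L) (a b : ℕ) : Sset L η₀ a b = OG L η₀ a b := rfl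

lemma Opt_parity (hL : Even L) (hL0 : 0 < L) (η₀ : Site L) (k j : ℕ) :
    isEvenSite L (Opt L η₀ k j) ↔ isEvenSite L η₀ := by
  refine isEvenSite_shift_even (n := 2 * k) hL hL0 (by omega) ?_
  show (η₀.1 + (k : ZMod L) + (j : ZMod L)) + (η₀.2 + (k : ZMod L) - (j : ZMod L))
    = η₀.1 + η₀.2 + ((2 * k : ℕ) : ZMod L)
  push_cast; ring

lemma Ept_parity (hL : Even L) (hL0 : 0 < L) (η₀ : Site L) (p q : ℕ) :
    isEvenSite L (Ept L η₀ p q) ↔ ¬ isEvenSite L η₀ := by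
  refine isEvenSite_shift_odd (n := 2 * p + (L - 1)) hL hL0 ?_ ?_
  · obtain ⟨t, ht⟩ := hL; omega
  · show (η₀.1 + (p : ZMod L) + (q : ZMod L) - 1) + (η₀.2 + (p : ZMod L) - (q : ZMod L))
      = η₀.1 + η₀.2 + ((2 * p + (L - 1) : ℕ) : ZMod L)
    have h2 : ((2 * p + (L - 1) : ℕ) : ZMod L) = 2 * (p : ZMod L) - 1 := by
      rw [Nat.cast_add, Nat.cast_sub (by omega : 1 ≤ L), ZMod.natCast_self]
      push_cast; ring
    rw [h2]; ring

lemma Opt_inj (η₀ : Site L) {k j k' j' : ℕ}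
    (hk : 2 * k < L) (hj : 2 * j < L) (hk' : 2 * k' < L) (hj' : 2 * j' < L)
    (h : Opt L η₀ k j = Opt L η₀ k' j') : k = k' ∧ j = j' := by
  have h1 := congrArg Prod.fst h
  have h2 := congrArg Prod.snd h
  simp only [Opt] at h1 h2
  have e1 : ((k + j : ℕ) : ZMod L) = ((k' + j' : ℕ) : ZMod L) := by
    push_cast; linear_combination h1
  have e2 : ((k + j' : ℕ) : ZMod L) = ((k' + j : ℕ) : ZMod L) := by
    push_cast; linear_combination h2
  have f1 := natCast_inj_of_lt (by omega) (by omega) e1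
  have f2 := natCast_inj_of_lt (by omega) (by omega) e2
  omega

lemma Ept_inj (η₀ : Site L) {p q p' q' : ℕ}
    (hp : 2 * p < L) (hq : 2 * q < L) (hp' : 2 * p' < L) (hq' : 2 * q' < L)
    (h : Ept L η₀ p q = Ept L η₀ p' q') : p = p' ∧ q = q' := by
  have h1 := congrArg Prod.fst h
  have h2 := congrArg Prod.snd h
  simp only [Ept] at h1 h2
  have e1 : ((p + q : ℕ) : ZMod L) = ((p' + q' : ℕ) : ZMod L) := by
    push_cast; linear_combination h1
  have e2 : ((p + q' : ℕ) : ZMod L) = ((p' + q : ℕ) : ZMod L) := by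
    push_cast; linear_combination h2
  have f1 := natCast_inj_of_lt (by omega) (by omega) e1
  have f2 := natCast_inj_of_lt (by omega) (by omega) e2
  omega

lemma adj_Opt (η₀ : Site L) (c j : ℕ) {w : Site L}
    (h : adjacent L (Opt L η₀ c j) w) :
    w = Ept L η₀ c j ∨ w = Ept L η₀ (c+1) j ∨ w = Ept L η₀ c (j+1) ∨
      w = Ept L η₀ (c+1) (j+1) := by
  rcases h with ⟨h1, h2 | h2⟩ | ⟨h1, h2 | h2⟩
  · -- (Opt).2 = w.2, (Opt).1 = w.1 + 1 : w = Opt - (1,0) = Ept c j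
    left
    simp only [Opt] at h1 h2
    refine Prod.ext ?_ ?_ <;> simp only [Ept]
    · linear_combination - h2
    · linear_combination - h1
  · -- w.1 = (Opt).1 + 1 : w = Opt + (1,0) = Ept (c+1) (j+1)
    right; right; right
    simp only [Opt] at h1 h2
    refine Prod.ext ?_ ?_ <;> simp only [Ept] <;> push_cast
    · linear_combination h2
    · linear_combination - h1
  · -- (Opt).1 = w.1, (Opt).2 = w.2 + 1 : w = Opt - (0,1) = Ept c (j+1)
    right; right; left
    simp only [Opt] at h1 h2
    refine Prod.ext ?_ ?_ <;> simp only [Ept] <;> push_cast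
    · linear_combination - h1
    · linear_combination - h2
  · -- w.2 = (Opt).2 + 1 : w = Opt + (0,1) = Ept (c+1) j
    right; left
    simp only [Opt] at h1 h2
    refine Prod.ext ?_ ?_ <;> simp only [Ept] <;> push_cast
    · linear_combination - h1
    · linear_combination h2

lemma adjE_1 (η₀ : Site L) (k j : ℕ) : adjacent L (Ept L η₀ k j) (Opt L η₀ k j) := by
  refine Or.inl ⟨?_, Or.inr ?_⟩ <;> simp only [Ept, Opt] <;> ring

lemma adjE_2 (η₀ : Site L) (k j : ℕ) :
    adjacent L (Ept L η₀ (k+1) j) (Opt L η₀ k j) := by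
  refine Or.inr ⟨?_, Or.inl ?_⟩ <;> simp only [Ept, Opt] <;> push_cast <;> ring

lemma adjE_3 (η₀ : Site L) (k j : ℕ) :
    adjacent L (Ept L η₀ k (j+1)) (Opt L η₀ k j) := by
  refine Or.inr ⟨?_, Or.inr ?_⟩ <;> simp only [Ept, Opt] <;> push_cast <;> ring

lemma adjE_4 (η₀ : Site L) (k j : ℕ) :
    adjacent L (Ept L η₀ (k+1) (j+1)) (Opt L η₀ k j) := by
  refine Or.inl ⟨?_, Or.inl ?_⟩ <;> simp only [Ept, Opt] <;> push_cast <;> ring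

lemma extB_eq (hL : Even L) (hL6 : 6 ≤ L) (η₀ : Site L) (hη₀ : ¬ isEvenSite L η₀) :
    extBoundary L (Sset L η₀ (L/2-1) (L/2-1)) = EG L η₀ (L/2-1) (L/2-1) := by
  obtain ⟨t, ht⟩ := hL
  have hL0 : 0 < L := by omega
  set ℓ := L / 2 - 1 with hℓdef
  have hℓ : 2 * ℓ + 2 = L := by omega
  have hℓ2 : 2 ≤ ℓ := by omega
  ext w
  constructor
  · rintro ⟨hwS, u, huS, hadj⟩
    obtain ⟨k, hk, j, hj, rfl⟩ := huS
    have hadj' : adjacent L (Opt L η₀ k j) w := adjacent_symm hadj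
    rcases adj_Opt η₀ k j hadj' with rfl | rfl | rfl | rfl
    · exact ⟨k, by omega, j, by omega, rfl⟩
    · exact ⟨k+1, by omega, j, by omega, rfl⟩
    · exact ⟨k, by omega, j+1, by omega, rfl⟩
    · exact ⟨k+1, by omega, j+1, by omega, rfl⟩
  · rintro ⟨p, hp, q, hq, rfl⟩
    constructor
    · rintro ⟨k, hk, j, hj, heq⟩
      have h1 := Ept_parity ⟨t, ht⟩ hL0 η₀ p q
      have h2 := Opt_parity ⟨t, ht⟩ hL0 η₀ k j
      rw [show ((η₀.1 + (k : ZMod L) + (j : ZMod L), η₀.2 + (k : ZMod L) - (j : ZMod L)) : Site L) = Opt L η₀ k j from rfl] at heq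
      rw [heq] at h1
      tauto
    · refine ⟨Opt L η₀ (min p (ℓ-1)) (min q (ℓ-1)), ⟨min p (ℓ-1), by omega, min q (ℓ-1), by omega, rfl⟩, ?_⟩
      by_cases hp' : p ≤ ℓ - 1 <;> by_cases hq' : q ≤ ℓ - 1
      · rw [min_eq_left hp', min_eq_left hq']
        exact adjE_1 η₀ p q
      · have hq2 : q = (ℓ - 1) + 1 := by omega
        rw [min_eq_left hp', min_eq_right (by omega : ℓ - 1 ≤ q), hq2]
        exact adjE_3 η₀ p (ℓ-1)
      · have hp2 : p = (ℓ - 1) + 1 := by omega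
        rw [min_eq_right (by omega : ℓ - 1 ≤ p), min_eq_left hq', hp2]
        exact adjE_2 η₀ (ℓ-1) q
      · have hp2 : p = (ℓ - 1) + 1 := by omega
        have hq2 : q = (ℓ - 1) + 1 := by omega
        rw [min_eq_right (by omega : ℓ - 1 ≤ p), min_eq_right (by omega : ℓ - 1 ≤ q), hp2, hq2]
        exact adjE_4 η₀ (ℓ-1) (ℓ-1)


lemma build_main (hL : Even L) (hL6 : 6 ≤ L) (η₀ : Site L) (hη₀ : ¬ isEvenSite L η₀) :
    ∀ c, c ≤ L / 2 - 1 → ∃ ω, goodSeg L (energy L (eCfg L) + L) ω (eCfg L)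
        (cfgAB L (EG L η₀ c (L / 2 - 1)) (OG L η₀ c (L / 2 - 1))) ∧
      energy L (cfgAB L (EG L η₀ c (L / 2 - 1)) (OG L η₀ c (L / 2 - 1)))
        = energy L (eCfg L) + ((c + (L / 2 - 1) + 1 : ℕ) : ℤ) ∧
      IsConfig L (cfgAB L (EG L η₀ c (L / 2 - 1)) (OG L η₀ c (L / 2 - 1))) := by
  haveI : NeZero L := ⟨by omega⟩
  have hL0 : 0 < L := by omega
  obtain ⟨t, ht⟩ := id hL
  set ℓ := L / 2 - 1 with hℓdef
  have hℓ : 2 * ℓ + 2 = L := by omega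
  have hℓ2 : 2 ≤ ℓ := by omega
  have hEG : ∀ P Q, EG L η₀ P Q ⊆ Ve L := by
    rintro P Q w ⟨p, hp, q, hq, rfl⟩
    exact (Ept_parity hL hL0 η₀ p q).2 hη₀
  have hEcol : ∀ P Q, Ecol L η₀ P Q ⊆ Ve L := by
    rintro P Q w ⟨q, hq, rfl⟩
    exact (Ept_parity hL hL0 η₀ P q).2 hη₀
  have hOG : ∀ K J, OG L η₀ K J ⊆ Vo L := by
    rintro K J w ⟨k, hk, j, hj, rfl⟩
    exact fun he => hη₀ ((Opt_parity hL hL0 η₀ k j).1 he)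
  have hOpart : ∀ c J, Opart L η₀ c J ⊆ Vo L := by
    rintro c J w ⟨j, hj, rfl⟩
    exact fun he => hη₀ ((Opt_parity hL hL0 η₀ c j).1 he)
  have hEptV : ∀ p q, isEvenSite L (Ept L η₀ p q) := fun p q =>
    (Ept_parity hL hL0 η₀ p q).2 hη₀
  have hOptV : ∀ k j, ¬ isEvenSite L (Opt L η₀ k j) := fun k j he =>
    hη₀ ((Opt_parity hL hL0 η₀ k j).1 he)
  -- phase 0 : removing the even sites of the first boundary column
  have P0 : ∀ j, j ≤ ℓ → ∃ ω, goodSeg L (energy L (eCfg L) + L) ω (eCfg L)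
      (cfgAB L (EG L η₀ 0 j) ∅) ∧
      energy L (cfgAB L (EG L η₀ 0 j) ∅)
        = energy L (eCfg L) + ((j + 1 : ℕ) : ℤ) ∧
      IsConfig L (cfgAB L (EG L η₀ 0 j) ∅) := by
    intro j
    induction j with
    | zero =>
      intro _
      obtain ⟨hstep, hcfg, hmval, hen⟩ := step_even_pkg (A := (∅ : Set (Site L)))
        (B := (∅ : Set (Site L))) (Set.empty_subset _) (Set.empty_subset _)
        (hEptV 0 0) (Set.notMem_empty _)
      have hset : insert (Ept L η₀ 0 0) (∅ : Set (Site L)) = EG L η₀ 0 0 := by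
        ext w
        simp only [Set.mem_insert_iff, Set.mem_empty_iff_false, or_false]
        constructor
        · rintro rfl; exact ⟨0, le_rfl, 0, le_rfl, rfl⟩
        · rintro ⟨p, hp, q, hq, rfl⟩
          obtain rfl : p = 0 := by omega
          obtain rfl : q = 0 := by omega
          rfl
      rw [cfgAB_empty, hset] at hstep hcfg hmval hen
      have hcfg0 : IsConfig L (cfgAB L (EG L η₀ 0 0) ∅) := hcfg (isConfig_eCfg hL hL0)
      have hen0 : energy L (cfgAB L (EG L η₀ 0 0) ∅) = energy L (eCfg L) + ((0 + 1 : ℕ) : ℤ) := by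
        rw [hen]; push_cast; ring
      refine ⟨[eCfg L, cfgAB L (EG L η₀ 0 0) ∅], ?_, hen0, hcfg0⟩
      refine goodSeg_snoc (ω := [eCfg L])
        (goodSeg_single (isConfig_eCfg hL hL0) (by linarith [show (0:ℤ) ≤ (L:ℤ) by positivity]))
        hstep hcfg0 hmval ?_
      rw [hen0]
      have : ((0 + 1 : ℕ) : ℤ) ≤ (L : ℤ) := by exact_mod_cast (show 0 + 1 ≤ L by omega)
      linarith
    | succ j ih =>
      intro hj
      obtain ⟨ω, hseg, hen, hcfg⟩ := ih (by omega)
      have hfresh : Ept L η₀ 0 (j+1) ∉ EG L η₀ 0 j := by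
        rintro ⟨p, hp, q, hq, heq⟩
        have := Ept_inj η₀ (by omega) (by omega) (by omega) (by omega) heq
        omega
      obtain ⟨hstep, hcfg', hmval, hen'⟩ := step_even_pkg (A := EG L η₀ 0 j)
        (B := (∅ : Set (Site L))) (hEG 0 j) (Set.empty_subset _)
        (hEptV 0 (j+1)) hfresh
      have hset : insert (Ept L η₀ 0 (j+1)) (EG L η₀ 0 j) = EG L η₀ 0 (j+1) := by
        ext w
        simp only [Set.mem_insert_iff]
        constructor
        · rintro (rfl | ⟨p, hp, q, hq, rfl⟩)
          · exact ⟨0, le_rfl, j+1, le_rfl, rfl⟩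
          · exact ⟨p, hp, q, by omega, rfl⟩
        · rintro ⟨p, hp, q, hq, rfl⟩
          obtain rfl : p = 0 := by omega
          by_cases hq' : q = j + 1
          · subst hq'; left; rfl
          · right; exact ⟨0, le_rfl, q, by omega, rfl⟩
      rw [hset] at hstep hcfg' hmval hen'
      have hcfg2 : IsConfig L (cfgAB L (EG L η₀ 0 (j+1)) ∅) := hcfg' hcfg
      have hen2 : energy L (cfgAB L (EG L η₀ 0 (j+1)) ∅)
          = energy L (eCfg L) + ((j + 1 + 1 : ℕ) : ℤ) := by
        rw [hen', hen]; push_cast; ring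
      refine ⟨ω ++ [cfgAB L (EG L η₀ 0 (j+1)) ∅],
        goodSeg_snoc hseg hstep hcfg2 hmval ?_, hen2, hcfg2⟩
      rw [hen2]
      have : ((j + 1 + 1 : ℕ) : ℤ) ≤ (L : ℤ) := by exact_mod_cast (show j + 1 + 1 ≤ L by omega)
      linarith
  -- main induction over completed columns
  intro c
  induction c with
  | zero =>
    intro _
    obtain ⟨ω, hseg, hen, hcfg⟩ := P0 ℓ le_rfl
    have hOG0 : (∅ : Set (Site L)) = OG L η₀ 0 ℓ := by
      ext w; simp only [Set.mem_empty_iff_false, false_iff, OG, Set.mem_setOf_eq]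
      rintro ⟨k, hk, -⟩; omega
    rw [hOG0] at hseg hen hcfg
    refine ⟨ω, hseg, ?_, hcfg⟩
    rw [hen]; push_cast; ring
  | succ c ihc =>
    intro hc
    obtain ⟨ω₀, hseg₀, hen₀, hcfg₀⟩ := ihc (by omega)
    -- inner induction : growing one diagonal column
    have COL : ∀ j, j ≤ ℓ → ∃ ω, goodSeg L (energy L (eCfg L) + L) ω (eCfg L)
        (cfgAB L (EG L η₀ c ℓ ∪ Ecol L η₀ (c+1) j) (OG L η₀ c ℓ ∪ Opart L η₀ c j)) ∧
        energy L (cfgAB L (EG L η₀ c ℓ ∪ Ecol L η₀ (c+1) j) (OG L η₀ c ℓ ∪ Opart L η₀ c j))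
          = energy L (eCfg L) + ((c + ℓ + 2 : ℕ) : ℤ) ∧
        IsConfig L (cfgAB L (EG L η₀ c ℓ ∪ Ecol L η₀ (c+1) j)
          (OG L η₀ c ℓ ∪ Opart L η₀ c j)) := by
      intro j
      induction j with
      | zero =>
        intro _
        have hfresh : Ept L η₀ (c+1) 0 ∉ EG L η₀ c ℓ := by
          rintro ⟨p, hp, q, hq, heq⟩
          have := Ept_inj η₀ (by omega) (by omega) (by omega) (by omega) heq
          omega
        obtain ⟨hstep, hcfg', hmval, hen'⟩ := step_even_pkg (A := EG L η₀ c ℓ)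
          (B := OG L η₀ c ℓ) (hEG c ℓ) (hOG c ℓ) (hEptV (c+1) 0) hfresh
        have hsetA : insert (Ept L η₀ (c+1) 0) (EG L η₀ c ℓ)
            = EG L η₀ c ℓ ∪ Ecol L η₀ (c+1) 0 := by
          ext w
          simp only [Set.mem_insert_iff, Set.mem_union]
          constructor
          · rintro (rfl | h)
            · exact Or.inr ⟨0, le_rfl, rfl⟩
            · exact Or.inl h
          · rintro (h | ⟨q, hq, rfl⟩)
            · exact Or.inr h
            · obtain rfl : q = 0 := by omega
              exact Or.inl rfl
        have hOpart0 : Opart L η₀ c 0 = (∅ : Set (Site L)) := by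
          ext w; simp only [Opart, Set.mem_setOf_eq, Set.mem_empty_iff_false, iff_false]
          rintro ⟨j', hj', -⟩; omega
        rw [hsetA] at hstep hcfg' hmval hen'
        rw [hOpart0, Set.union_empty]
        have hcfg2 := hcfg' hcfg₀
        have hen2 : energy L (cfgAB L (EG L η₀ c ℓ ∪ Ecol L η₀ (c+1) 0) (OG L η₀ c ℓ))
            = energy L (eCfg L) + ((c + ℓ + 2 : ℕ) : ℤ) := by
          rw [hen', hen₀]; push_cast; ring
        refine ⟨ω₀ ++ [cfgAB L (EG L η₀ c ℓ ∪ Ecol L η₀ (c+1) 0) (OG L η₀ c ℓ)],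
          goodSeg_snoc hseg₀ hstep hcfg2 hmval ?_, hen2, hcfg2⟩
        rw [hen2]
        have : ((c + ℓ + 2 : ℕ) : ℤ) ≤ (L : ℤ) := by
          exact_mod_cast (show c + ℓ + 2 ≤ L by omega)
        linarith
      | succ j ihj =>
        intro hj
        obtain ⟨ω₁, hseg₁, hen₁, hcfg₁⟩ := ihj (by omega)
        -- first snoc : remove even site Ept (c+1) (j+1)
        have hfresh1 : Ept L η₀ (c+1) (j+1) ∉ EG L η₀ c ℓ ∪ Ecol L η₀ (c+1) j := by
          rintro (⟨p, hp, q, hq, heq⟩ | ⟨q, hq, heq⟩)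
          · have := Ept_inj η₀ (by omega) (by omega) (by omega) (by omega) heq
            omega
          · have := Ept_inj η₀ (by omega) (by omega) (by omega) (by omega) heq
            omega
        obtain ⟨hstep1, hcfgi1, hmval1, heni1⟩ := step_even_pkg
          (A := EG L η₀ c ℓ ∪ Ecol L η₀ (c+1) j) (B := OG L η₀ c ℓ ∪ Opart L η₀ c j)
          (Set.union_subset (hEG c ℓ) (hEcol (c+1) j))
          (Set.union_subset (hOG c ℓ) (hOpart c j))
          (hEptV (c+1) (j+1)) hfresh1
        have hsetA : insert (Ept L η₀ (c+1) (j+1)) (EG L η₀ c ℓ ∪ Ecol L η₀ (c+1) j)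
            = EG L η₀ c ℓ ∪ Ecol L η₀ (c+1) (j+1) := by
          ext w
          simp only [Set.mem_insert_iff, Set.mem_union]
          constructor
          · rintro (rfl | h | ⟨q, hq, rfl⟩)
            · exact Or.inr ⟨j+1, le_rfl, rfl⟩
            · exact Or.inl h
            · exact Or.inr ⟨q, by omega, rfl⟩
          · rintro (h | ⟨q, hq, rfl⟩)
            · exact Or.inr (Or.inl h)
            · by_cases hq' : q = j + 1
              · subst hq'; exact Or.inl rfl
              · exact Or.inr (Or.inr ⟨q, by omega, rfl⟩)
        rw [hsetA] at hstep1 hcfgi1 hmval1 heni1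
        have hcfgmid := hcfgi1 hcfg₁
        have henmid : energy L (cfgAB L (EG L η₀ c ℓ ∪ Ecol L η₀ (c+1) (j+1))
            (OG L η₀ c ℓ ∪ Opart L η₀ c j))
            = energy L (eCfg L) + ((c + ℓ + 3 : ℕ) : ℤ) := by
          rw [heni1, hen₁]; push_cast; ring
        have hsegmid := goodSeg_snoc hseg₁ hstep1 hcfgmid hmval1 (by
          rw [henmid]
          have : ((c + ℓ + 3 : ℕ) : ℤ) ≤ (L : ℤ) := by
            exact_mod_cast (show c + ℓ + 3 ≤ L by omega)
          linarith)
        -- second snoc : add odd site Opt c j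
        have hfresh2 : Opt L η₀ c j ∉ OG L η₀ c ℓ ∪ Opart L η₀ c j := by
          rintro (⟨k, hk, j', hj', heq⟩ | ⟨j', hj', heq⟩)
          · have := Opt_inj η₀ (by omega) (by omega) (by omega) (by omega) heq
            omega
          · have := Opt_inj η₀ (by omega) (by omega) (by omega) (by omega) heq
            omega
        have hnbr : ∀ w, adjacent L (Opt L η₀ c j) w →
            w ∈ EG L η₀ c ℓ ∪ Ecol L η₀ (c+1) (j+1) := by
          intro w hw
          rcases adj_Opt η₀ c j hw with rfl | rfl | rfl | rfl
          · exact Or.inl ⟨c, le_rfl, j, by omega, rfl⟩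
          · exact Or.inr ⟨j, by omega, rfl⟩
          · exact Or.inl ⟨c, le_rfl, j+1, by omega, rfl⟩
          · exact Or.inr ⟨j+1, le_rfl, rfl⟩
        obtain ⟨hstep2, hcfgi2, hmval2, heni2⟩ := step_odd_pkg
          (A := EG L η₀ c ℓ ∪ Ecol L η₀ (c+1) (j+1)) (B := OG L η₀ c ℓ ∪ Opart L η₀ c j)
          (Set.union_subset (hEG c ℓ) (hEcol (c+1) (j+1)))
          (Set.union_subset (hOG c ℓ) (hOpart c j))
          (hOptV c j) hfresh2 hnbr
        have hsetB : insert (Opt L η₀ c j) (OG L η₀ c ℓ ∪ Opart L η₀ c j)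
            = OG L η₀ c ℓ ∪ Opart L η₀ c (j+1) := by
          ext w
          simp only [Set.mem_insert_iff, Set.mem_union]
          constructor
          · rintro (rfl | h | ⟨j', hj', rfl⟩)
            · exact Or.inr ⟨j, by omega, rfl⟩
            · exact Or.inl h
            · exact Or.inr ⟨j', by omega, rfl⟩
          · rintro (h | ⟨j', hj', rfl⟩)
            · exact Or.inr (Or.inl h)
            · by_cases hj'' : j' = j
              · subst hj''; exact Or.inl rfl
              · exact Or.inr (Or.inr ⟨j', by omega, rfl⟩)
        rw [hsetB] at hstep2 hcfgi2 hmval2 heni2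
        have hcfg2 := hcfgi2 hcfgmid
        have hen2 : energy L (cfgAB L (EG L η₀ c ℓ ∪ Ecol L η₀ (c+1) (j+1))
            (OG L η₀ c ℓ ∪ Opart L η₀ c (j+1)))
            = energy L (eCfg L) + ((c + ℓ + 2 : ℕ) : ℤ) := by
          rw [henmid] at heni2; push_cast at heni2 ⊢; linarith
        refine ⟨(ω₁ ++ [cfgAB L (EG L η₀ c ℓ ∪ Ecol L η₀ (c+1) (j+1))
            (OG L η₀ c ℓ ∪ Opart L η₀ c j)]) ++ [cfgAB L (EG L η₀ c ℓ ∪ Ecol L η₀ (c+1) (j+1))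
            (OG L η₀ c ℓ ∪ Opart L η₀ c (j+1))],
          goodSeg_snoc hsegmid hstep2 hcfg2 hmval2 ?_, hen2, hcfg2⟩
        rw [hen2]
        have : ((c + ℓ + 2 : ℕ) : ℤ) ≤ (L : ℤ) := by
          exact_mod_cast (show c + ℓ + 2 ≤ L by omega)
        linarith
    -- assemble column into next state
    obtain ⟨ω, hseg, hen, hcfg⟩ := COL ℓ le_rfl
    have hEGstep : EG L η₀ c ℓ ∪ Ecol L η₀ (c+1) ℓ = EG L η₀ (c+1) ℓ := by
      ext w
      simp only [Set.mem_union]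
      constructor
      · rintro (⟨p, hp, q, hq, rfl⟩ | ⟨q, hq, rfl⟩)
        · exact ⟨p, by omega, q, hq, rfl⟩
        · exact ⟨c+1, le_rfl, q, hq, rfl⟩
      · rintro ⟨p, hp, q, hq, rfl⟩
        by_cases hp' : p = c + 1
        · subst hp'; exact Or.inr ⟨q, hq, rfl⟩
        · exact Or.inl ⟨p, by omega, q, hq, rfl⟩
    have hOGstep : OG L η₀ c ℓ ∪ Opart L η₀ c ℓ = OG L η₀ (c+1) ℓ := by
      ext w
      simp only [Set.mem_union]
      constructor
      · rintro (⟨k, hk, j, hj, rfl⟩ | ⟨j, hj, rfl⟩)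
        · exact ⟨k, by omega, j, hj, rfl⟩
        · exact ⟨c, by omega, j, hj, rfl⟩
      · rintro ⟨k, hk, j, hj, rfl⟩
        by_cases hk' : k = c
        · subst hk'; exact Or.inr ⟨j, hj, rfl⟩
        · exact Or.inl ⟨k, by omega, j, hj, rfl⟩
    rw [hEGstep, hOGstep] at hseg hen hcfg
    refine ⟨ω, hseg, ?_, hcfg⟩
    rw [hen]; push_cast; ring


lemma goodSeg_mono {c c' : ℤ} {ω : List (Site L → Bool)} {σ τ : Site L → Bool}
    (h : c ≤ c') (hg : goodSeg L c ω σ τ) : goodSeg L c' ω σ τ := by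
  obtain ⟨h1, h2, h3, h4, h5, h6⟩ := hg
  exact ⟨h1, h2, h3, h4, h5, fun ξ hξ => le_trans (h6 ξ hξ) h⟩

lemma chain'_mval_pairwise {ω : List (Site L → Bool)}
    (h : ω.Chain' (fun a b => mval L a + 1 = mval L b)) :
    ω.Pairwise (fun a b => mval L a ≠ mval L b) := by
  have hlt : ω.Chain' (fun a b => mval L a < mval L b) :=
    List.IsChain.imp (fun a b hab => by omega) h
  haveI : IsTrans (Site L → Bool) (fun a b => mval L a < mval L b) :=
    ⟨fun a b c h1 h2 => lt_trans h1 h2⟩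
  exact (List.isChain_iff_pairwise.mp hlt).imp (fun hab => ne_of_lt hab)

end AuxProof

/-- **Optimal paths into `C_ir(e,o)`.** For every `η ∈ C_ir(e,o)` there is a
non-backtracking path from `e` to `η`, with consecutive configurations
differing in exactly one site, whose energy is maximal only at `η`; moreover
`H(η) = H(e) + L + 1`. -/
theorem path_to_Cir (L : ℕ) (hL : Even L) (hL6 : 6 ≤ L)
    (η : Site L → Bool) (hη : η ∈ Cir L) :
    ∃ ω : List (Site L → Bool),
      (∀ ξ ∈ ω, IsConfig L ξ) ∧ ω.Chain' (stepRel1 L) ∧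
      ω.head? = some (eCfg L) ∧ ω.getLast? = some η ∧
      NonBacktracking L ω ∧
      (∀ ξ ∈ ω, ξ ≠ η → energy L ξ < energy L η) ∧
      energy L η = energy L (eCfg L) + (L : ℤ) + 1 := by
  haveI : NeZero L := ⟨by omega⟩
  haveI : Fact (1 < L) := ⟨by omega⟩
  have hL0 : 0 < L := by omega
  obtain ⟨t, ht⟩ := id hL
  obtain ⟨hcfgη, η₀, hη₀, v, hv, D, hD, hdisj, hnadj, hdist, hreg⟩ := hη
  have hη₀' : ¬ isEvenSite L η₀ := hη₀
  have hv' : isEvenSite L v := hv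
  have hℓ : 2 * (L / 2 - 1) + 2 = L := by omega
  have hℓ2 : 2 ≤ L / 2 - 1 := by omega
  -- the two sites of the degenerate rhombus D
  obtain ⟨d₂, hd₂V, hDpair, hvd₂⟩ :
      ∃ d₂, isEvenSite L d₂ ∧ D = {v, d₂} ∧ v ≠ d₂ := by
    have hone : ((1 : ℕ) : ZMod L) = (1 : ZMod L) := Nat.cast_one
    rcases hD with rfl | rfl
    · refine ⟨(v.1 + 1, v.2 - 1), ?_, ?_, ?_⟩
      · refine (isEvenSite_shift_even (n := 0) hL hL0 rfl ?_).2 hv'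
        push_cast; ring
      · ext w
        simp only [degRhombus10, Set.mem_setOf_eq, Set.mem_insert_iff,
          Set.mem_singleton_iff]
        constructor
        · rintro ⟨k, hk, rfl⟩
          interval_cases k
          · left; simp
          · right; rw [hone]
        · rintro (rfl | rfl)
          · exact ⟨0, by omega, by simp⟩
          · exact ⟨1, le_rfl, by rw [hone]⟩
      · intro h
        have h1 := congrArg Prod.fst h
        simp only at h1
        have h2 : (1 : ZMod L) = 0 := by linear_combination - h1
        have h3 := congrArg ZMod.val h2
        rw [ZMod.val_one, ZMod.val_zero] at h3
        omega
    · refine ⟨(v.1 + 1, v.2 + 1), ?_, ?_, ?_⟩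
      · refine (isEvenSite_shift_even (n := 2) hL hL0 rfl ?_).2 hv'
        push_cast; ring
      · ext w
        simp only [degRhombus01, Set.mem_setOf_eq, Set.mem_insert_iff,
          Set.mem_singleton_iff]
        constructor
        · rintro ⟨k, hk, rfl⟩
          interval_cases k
          · left; simp
          · right; rw [hone]
        · rintro (rfl | rfl)
          · exact ⟨0, by omega, by simp⟩
          · exact ⟨1, le_rfl, by rw [hone]⟩
      · intro h
        have h1 := congrArg Prod.fst h
        simp only at h1
        have h2 : (1 : ZMod L) = 0 := by linear_combination - h1
        have h3 := congrArg ZMod.val h2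
        rw [ZMod.val_one, ZMod.val_zero] at h3
        omega
  -- identification of the rhombus with the explicit grids
  have hR : rhombusND L η₀ (L / 2 - 1) (L / 2 - 1)
      = OG L η₀ (L / 2 - 1) (L / 2 - 1) ∪ EG L η₀ (L / 2 - 1) (L / 2 - 1) := by
    show Sset L η₀ (L / 2 - 1) (L / 2 - 1)
        ∪ extBoundary L (Sset L η₀ (L / 2 - 1) (L / 2 - 1)) = _
    rw [extB_eq hL hL6 η₀ hη₀', Sset_eq_OG]
  have hEGsub : EG L η₀ (L / 2 - 1) (L / 2 - 1) ⊆ Ve L := by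
    rintro w ⟨p, hp, q, hq, rfl⟩
    exact (Ept_parity hL hL0 η₀ p q).2 hη₀'
  have hOGsub : OG L η₀ (L / 2 - 1) (L / 2 - 1) ⊆ Vo L := by
    rintro w ⟨k, hk, j, hj, rfl⟩
    exact fun he => hη₀' ((Opt_parity hL hL0 η₀ k j).1 he)
  have hvD : v ∈ D := by rw [hDpair]; left; rfl
  have hd₂D : d₂ ∈ D := by rw [hDpair]; right; rfl
  have hnotEG : ∀ x ∈ D, x ∉ EG L η₀ (L / 2 - 1) (L / 2 - 1) := by
    intro x hx hxE
    exact (Set.disjoint_right.mp hdisj hx) (by rw [hR]; exact Or.inr hxE)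
  -- the path up to the full rhombus
  obtain ⟨ω₀, hseg₀, hen₀, hcfg₀⟩ := build_main hL hL6 η₀ hη₀' (L / 2 - 1) le_rfl
  -- snoc the first site of D
  obtain ⟨hstep1, hcfgi1, hmval1, heni1⟩ := step_even_pkg
    (A := EG L η₀ (L / 2 - 1) (L / 2 - 1)) (B := OG L η₀ (L / 2 - 1) (L / 2 - 1))
    hEGsub hOGsub hv' (hnotEG v hvD)
  have hcfg₁ := hcfgi1 hcfg₀
  have hen₁ : energy L (cfgAB L (insert v (EG L η₀ (L / 2 - 1) (L / 2 - 1)))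
      (OG L η₀ (L / 2 - 1) (L / 2 - 1))) = energy L (eCfg L) + (L : ℤ) := by
    rw [heni1, hen₀]
    have hcast : ((L / 2 - 1 + (L / 2 - 1) + 1 : ℕ) : ℤ) = (L : ℤ) - 1 := by
      have h1 : (L / 2 - 1 + (L / 2 - 1) + 1 : ℕ) = L - 1 := by omega
      rw [h1, Nat.cast_sub (by omega : 1 ≤ L)]; norm_num
    rw [hcast]; ring
  have hseg₁ := goodSeg_snoc hseg₀ hstep1 hcfg₁ hmval1 (by rw [hen₁])
  -- snoc the second site of D ; the resulting configuration is η
  have hfresh2 : d₂ ∉ insert v (EG L η₀ (L / 2 - 1) (L / 2 - 1)) := by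
    intro h
    rcases h with h | h
    · exact hvd₂ h.symm
    · exact hnotEG d₂ hd₂D h
  obtain ⟨hstep2, hcfgi2, hmval2, heni2⟩ := step_even_pkg
    (A := insert v (EG L η₀ (L / 2 - 1) (L / 2 - 1)))
    (B := OG L η₀ (L / 2 - 1) (L / 2 - 1))
    (Set.insert_subset hv' hEGsub) hOGsub hd₂V hfresh2
  -- final configuration equals η
  have hAf : insert d₂ (insert v (EG L η₀ (L / 2 - 1) (L / 2 - 1)))
      = EG L η₀ (L / 2 - 1) (L / 2 - 1) ∪ D := by
    rw [hDpair]; ext w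
    simp only [Set.mem_insert_iff, Set.mem_union, Set.mem_singleton_iff]
    tauto
  have hAfVe : insert d₂ (insert v (EG L η₀ (L / 2 - 1) (L / 2 - 1))) ⊆ Ve L :=
    Set.insert_subset hd₂V (Set.insert_subset hv' hEGsub)
  have hDVe : ∀ x ∈ D, isEvenSite L x := by
    intro x hx
    rw [hDpair] at hx
    rcases hx with rfl | rfl
    · exact hv'
    · exact hd₂V
  have hmem : ∀ w : Site L, w ∈ oddRegion L η ↔
      w ∈ (OG L η₀ (L / 2 - 1) (L / 2 - 1) ∪ EG L η₀ (L / 2 - 1) (L / 2 - 1)) ∪ D := by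
    intro w; rw [hreg, hR]
  have hfinal : cfgAB L (insert d₂ (insert v (EG L η₀ (L / 2 - 1) (L / 2 - 1))))
      (OG L η₀ (L / 2 - 1) (L / 2 - 1)) = η := by
    funext w
    by_cases hw : isEvenSite L w
    · have hwOR : w ∈ oddRegion L η ↔ η w = false := by
        constructor
        · rintro (⟨h1, -⟩ | ⟨-, h2⟩)
          · exact absurd hw h1
          · exact h2
        · intro h; exact Or.inr ⟨hw, h⟩
      have hηiff : η w = false ↔ w ∈ EG L η₀ (L / 2 - 1) (L / 2 - 1) ∪ D := by
        rw [← hwOR, hmem w]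
        constructor
        · rintro ((hOGm | hEGm) | hDm)
          · exact absurd hw (fun _ => hOGsub hOGm hw)
          · exact Or.inl hEGm
          · exact Or.inr hDm
        · rintro (h | h)
          · exact Or.inl (Or.inr h)
          · exact Or.inr h
      have hwB : w ∉ OG L η₀ (L / 2 - 1) (L / 2 - 1) := fun h => (hOGsub h) hw
      by_cases hwA : w ∈ EG L η₀ (L / 2 - 1) (L / 2 - 1) ∪ D
      · rw [cfgAB_even_mem (by rw [hAf]; exact hwA) hwB, (hηiff.mpr hwA)]
      · rw [cfgAB_even_not hw (by rw [hAf]; exact hwA) hwB]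
        cases hval : η w with
        | false => exact absurd (hηiff.mp hval) hwA
        | true => rfl
    · have hwOR : w ∈ oddRegion L η ↔ η w = true := by
        constructor
        · rintro (⟨-, h2⟩ | ⟨h1, -⟩)
          · exact h2
          · exact absurd h1 hw
        · intro h; exact Or.inl ⟨hw, h⟩
      have hηiff : η w = true ↔ w ∈ OG L η₀ (L / 2 - 1) (L / 2 - 1) := by
        rw [← hwOR, hmem w]
        constructor
        · rintro ((hOGm | hEGm) | hDm)
          · exact hOGm
          · exact absurd (hEGsub hEGm) hw
          · exact absurd (hDVe _ hDm) hw
        · intro h; exact Or.inl (Or.inl h)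
      have hwA : w ∉ insert d₂ (insert v (EG L η₀ (L / 2 - 1) (L / 2 - 1))) :=
        fun h => hw (hAfVe h)
      by_cases hwB : w ∈ OG L η₀ (L / 2 - 1) (L / 2 - 1)
      · rw [cfgAB_odd_mem hwB, (hηiff.mpr hwB)]
      · rw [cfgAB_odd_not hw hwA hwB]
        cases hval : η w with
        | false => rfl
        | true => exact absurd (hηiff.mp hval) hwB
  rw [hfinal] at hstep2 hmval2 heni2
  have henη : energy L η = energy L (eCfg L) + (L : ℤ) + 1 := by
    rw [heni2, hen₁]
  -- assemble the full path
  have hfull : goodSeg L (energy L (eCfg L) + L + 1)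
      ((ω₀ ++ [cfgAB L (insert v (EG L η₀ (L / 2 - 1) (L / 2 - 1)))
        (OG L η₀ (L / 2 - 1) (L / 2 - 1))]) ++ [η]) (eCfg L) η := by
    refine goodSeg_snoc (goodSeg_mono (by linarith) hseg₁) hstep2 hcfgη hmval2 ?_
    rw [henη]
  obtain ⟨hh, hl, hcfgs, hch, hmch, -⟩ := hfull
  refine ⟨_, hcfgs, hch, hh, hl, chain'_mval_pairwise hmch, ?_, henη⟩
  intro ξ hξ hne
  rcases List.mem_append.1 hξ with h' | h'
  · have := hseg₁.2.2.2.2.2 ξ h'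
    rw [henη]; linarith
  · simp at h'; exact absurd h' hne

end HardCoreGrid
end
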